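/- arXiv:1210.8395 — 6 statements merged into one kernel-verified Lean document; each statement's English description precedes it below -/
import Mathlib

section
/- For all m, n ≥ 1 with (m,n) ≠ (1,1), the treewidth of the n×m two-dimensional planar grid graph equals min{m,n}. -/
open SimpleGraph

/-- A tree decomposition of `G` with tree `T` and bags `B`. -/
def IsTreeDecomp {V I : Type} (G : SimpleGraph V) (T : SimpleGraph I)
    (B : I → Finset V) : Prop :=
  T.IsTree ∧
  (∀ v : V, ∃ i : I, v ∈ B i) ∧
  (∀ u v : V, G.Adj u v → ∃ i : I, u ∈ B i ∧ v ∈ B i) ∧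
  (∀ v : V, (T.induce {i : I | v ∈ B i}).Connected)

/-- The treewidth of `G`: the least `k` such that `G` has a tree decomposition
all of whose bags have at most `k + 1` vertices (i.e. width at most `k`). -/
noncomputable def treewidth {V : Type} (G : SimpleGraph V) : ℕ :=
  sInf {k : ℕ | ∃ (I : Type) (T : SimpleGraph I) (B : I → Finset V),
    IsTreeDecomp G T B ∧ ∀ i : I, (B i).card ≤ k + 1}

/-- `H` is a minor of `G`: branch sets are nonempty (connectedness includes
nonemptiness), induce connected subgraphs, are pairwise disjoint, and every
edge of `H` is realized by an edge of `G` between the corresponding branch sets. -/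
def IsMinor {V W : Type} (H : SimpleGraph V) (G : SimpleGraph W) : Prop :=
  ∃ φ : V → Set W,
    (∀ v : V, (G.induce (φ v)).Connected) ∧
    (∀ u v : V, u ≠ v → Disjoint (φ u) (φ v)) ∧
    (∀ u v : V, H.Adj u v → ∃ a ∈ φ u, ∃ b ∈ φ v, G.Adj a b)

/-- The `n × m` two-dimensional grid graph: vertices `(i, j)` are adjacent iff
they differ by exactly 1 in one coordinate and agree in the other. -/
def gridGraph (n m : ℕ) : SimpleGraph (Fin n × Fin m) :=
  SimpleGraph.fromRel (fun p q =>
    (p.1 = q.1 ∧ p.2.val + 1 = q.2.val) ∨ (p.2 = q.2 ∧ p.1.val + 1 = q.1.val))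

/-- The hardware graph `F(m, c)`: an `m × m` grid of `K_{c,c}` unit cells.
A vertex `(a, b, d)` lies in cell `(a, b)`; it is on the left half if `d < c`
and the right half otherwise.  Left and right halves of a cell are completely
joined; left-half vertices are joined to their images in the cell directly
below; right-half vertices are joined to their images in the cell to the right. -/
def hardwareGraph (m c : ℕ) : SimpleGraph (Fin m × Fin m × Fin (2 * c)) :=
  SimpleGraph.fromRel (fun x y =>
    (x.1 = y.1 ∧ x.2.1 = y.2.1 ∧ x.2.2.val < c ∧ c ≤ y.2.2.val) ∨
    (x.2.1 = y.2.1 ∧ x.2.2 = y.2.2 ∧ x.2.2.val < c ∧ x.1.val + 1 = y.1.val) ∨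
    (x.1 = y.1 ∧ x.2.2 = y.2.2 ∧ c ≤ x.2.2.val ∧ x.2.1.val + 1 = y.2.1.val))


/-- Hom from an induced subgraph into the ambient graph. -/
def inducedHom (G : SimpleGraph V) (s : Set V) : G.induce s →g G :=
  ⟨Subtype.val, fun h => h⟩

lemma exists_walk_in_of_induce_connected {G : SimpleGraph V} {s : Set V}
    (h : (G.induce s).Connected) {a b : V} (ha : a ∈ s) (hb : b ∈ s) :
    ∃ w : G.Walk a b, ∀ x ∈ w.support, x ∈ s := by
  obtain ⟨w⟩ := h.preconnected ⟨a, ha⟩ ⟨b, hb⟩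
  refine ⟨w.map (inducedHom G s), ?_⟩
  intro x hx
  have hx : x ∈ (w.map (inducedHom G s)).support := hx
  rw [SimpleGraph.Walk.support_map, List.mem_map] at hx
  obtain ⟨y, _, rfl⟩ := hx
  exact y.2

lemma reachable_induce_of_walk {G : SimpleGraph V} {s : Set V} :
    ∀ {a b : V} (w : G.Walk a b), (∀ x ∈ w.support, x ∈ s) →
    ∀ (ha : a ∈ s) (hb : b ∈ s), (G.induce s).Reachable ⟨a, ha⟩ ⟨b, hb⟩ := by
  intro a b w
  induction w with
  | nil => intro _ ha hb; exact Reachable.refl _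
  | @cons u c b h p ih =>
    intro hs ha hb
    have hc : c ∈ s := hs c (by simp)
    have hadj : (G.induce s).Adj ⟨u, ha⟩ ⟨c, hc⟩ := h
    exact hadj.reachable.trans (ih (fun x hx => hs x (by simp [hx])) hc hb)

lemma induce_connected_of_walks {G : SimpleGraph V} {s : Set V} (hne : s.Nonempty)
    (h : ∀ a ∈ s, ∀ b ∈ s, ∃ w : G.Walk a b, ∀ x ∈ w.support, x ∈ s) :
    (G.induce s).Connected := by
  rw [connected_iff_exists_forall_reachable]
  obtain ⟨a, ha⟩ := hne
  refine ⟨⟨a, ha⟩, ?_⟩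
  rintro ⟨b, hb⟩
  obtain ⟨w, hw⟩ := h a ha b hb
  exact reachable_induce_of_walk w hw ha hb

/-- A nonempty set of vertices closed under walks inside it. -/
def Subtree (T : SimpleGraph I) (S : Set I) : Prop :=
  S.Nonempty ∧ ∀ a ∈ S, ∀ b ∈ S, ∃ w : T.Walk a b, ∀ x ∈ w.support, x ∈ S

lemma Subtree.path_subset {T : SimpleGraph I} (hac : T.IsAcyclic) {S : Set I}
    (hS : Subtree T S) {a b : I} (ha : a ∈ S) (hb : b ∈ S)
    (p : T.Walk a b) (hp : p.IsPath) : ∀ x ∈ p.support, x ∈ S := by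
  classical
  obtain ⟨w, hw⟩ := hS.2 a ha b hb
  have heq : (⟨p, hp⟩ : T.Path a b) = w.toPath := hac.path_unique _ _
  have hsub := w.support_toPath_subset
  intro x hx
  have : x ∈ (w.toPath : T.Walk a b).support := by
    rw [← heq]; exact hx
  exact hw x (hsub this)

/-- Split a walk at the first vertex satisfying a predicate that holds at the end. -/
lemma walk_split {T : SimpleGraph I} (P : Set I) :
    ∀ {z x : I} (Q : T.Walk z x), Q.IsPath → x ∈ P →
    ∃ (m : I) (Q₁ : T.Walk z m), m ∈ P ∧ Q₁.IsPath ∧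
      (∀ u ∈ Q₁.support, u ∈ Q.support) ∧ (∀ u ∈ Q₁.support, u ∈ P → u = m) := by
  intro z x Q
  induction Q with
  | nil =>
    intro _ hx
    refine ⟨_, SimpleGraph.Walk.nil, hx, SimpleGraph.Walk.IsPath.nil, by simp, by simp⟩
  | @cons z c x h Q ih =>
    intro hpath hx
    rw [SimpleGraph.Walk.cons_isPath_iff] at hpath
    by_cases hz : z ∈ P
    · refine ⟨z, SimpleGraph.Walk.nil, hz, SimpleGraph.Walk.IsPath.nil, by simp, by simp⟩
    · obtain ⟨m, Q₁, hm, hQ₁path, hQ₁sub, hQ₁P⟩ := ih hpath.1 hx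
      refine ⟨m, SimpleGraph.Walk.cons h Q₁, hm, ?_, ?_, ?_⟩
      · rw [SimpleGraph.Walk.cons_isPath_iff]
        exact ⟨hQ₁path, fun hzc => (hpath.2 (hQ₁sub z hzc))⟩
      · intro u hu
        rw [SimpleGraph.Walk.support_cons, List.mem_cons] at hu ⊢
        rcases hu with rfl | hu
        · exact Or.inl rfl
        · exact Or.inr (hQ₁sub u hu)
      · intro u hu huP
        rw [SimpleGraph.Walk.support_cons, List.mem_cons] at hu
        rcases hu with rfl | hu
        · exact absurd huP hz
        · exact hQ₁P u hu huP

lemma tree_median {T : SimpleGraph I} (hT : T.IsTree) (x y z : I) :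
    ∃ (m : I) (p : T.Walk x y) (q : T.Walk x z) (r : T.Walk y z),
      p.IsPath ∧ q.IsPath ∧ r.IsPath ∧
      m ∈ p.support ∧ m ∈ q.support ∧ m ∈ r.support := by
  classical
  obtain ⟨P0⟩ := hT.isConnected.preconnected x y
  obtain ⟨Q0⟩ := hT.isConnected.preconnected z x
  set P : T.Walk x y := (P0.toPath : T.Walk x y) with hP
  set Q : T.Walk z x := (Q0.toPath : T.Walk z x) with hQ
  have hPp : P.IsPath := P0.toPath.2
  have hQp : Q.IsPath := Q0.toPath.2
  have hxP : x ∈ ({u | u ∈ P.support} : Set I) := P.start_mem_support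
  obtain ⟨m, Q₁, hmP, hQ₁p, hQ₁sub, hQ₁fst⟩ := walk_split {u | u ∈ P.support} Q hQp hxP
  have hmP' : m ∈ P.support := hmP
  set P₂ : T.Walk m y := P.dropUntil m hmP' with hP₂
  have hP₂p : P₂.IsPath := hPp.dropUntil hmP'
  have hP₂sub : ∀ u ∈ P₂.support, u ∈ P.support := fun u hu =>
    P.support_dropUntil_subset hmP' hu
  -- W : Walk z y, a path
  set W : T.Walk z y := Q₁.append P₂ with hW
  have hWp : W.IsPath := by
    rw [SimpleGraph.Walk.isPath_def, hW, SimpleGraph.Walk.support_append]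
    apply List.Nodup.append
    · exact hQ₁p.support_nodup
    · have := hP₂p.support_nodup
      rw [SimpleGraph.Walk.support_eq_cons] at this
      exact this.of_cons
    · intro u huQ₁ huP₂t
      have huP₂ : u ∈ P₂.support := by
        rw [SimpleGraph.Walk.support_eq_cons]
        exact List.mem_cons_of_mem _ huP₂t
      have : u = m := hQ₁fst u huQ₁ (hP₂sub u huP₂)
      subst this
      have := hP₂p.support_nodup
      rw [SimpleGraph.Walk.support_eq_cons] at this
      exact (this.notMem) huP₂t
  refine ⟨m, P, Q.reverse, W.reverse, hPp, hQp.reverse, hWp.reverse, hmP', ?_, ?_⟩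
  · rw [SimpleGraph.Walk.support_reverse, List.mem_reverse]
    exact hQ₁sub m Q₁.end_mem_support
  · rw [SimpleGraph.Walk.support_reverse, List.mem_reverse, hW,
      SimpleGraph.Walk.mem_support_append_iff]
    exact Or.inl Q₁.end_mem_support

lemma tree_helly {T : SimpleGraph I} (hT : T.IsTree) (F : Finset (Set I)) :
    ∀ (A : Set I), Subtree T A → (∀ S ∈ F, Subtree T S) →
    (∀ S ∈ F, (A ∩ S).Nonempty) →
    (∀ S ∈ F, ∀ S' ∈ F, (S ∩ S').Nonempty) →
    ∃ m ∈ A, ∀ S ∈ F, m ∈ S := by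
  classical
  induction F using Finset.induction_on with
  | empty =>
    intro A hA _ _ _
    obtain ⟨a, ha⟩ := hA.1
    exact ⟨a, ha, by simp⟩
  | @insert S₀ F' hS₀F' ih =>
    intro A hA hS hmeet hpair
    have hS₀ : Subtree T S₀ := hS S₀ (Finset.mem_insert_self _ _)
    -- A ∩ S₀ is a subtree
    have hA' : Subtree T (A ∩ S₀) := by
      refine ⟨hmeet S₀ (Finset.mem_insert_self _ _), ?_⟩
      intro a ha b hb
      obtain ⟨w, _⟩ := hA.2 a ha.1 b hb.1
      refine ⟨w.toPath, fun u hu => ?_⟩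
      exact ⟨Subtree.path_subset hT.IsAcyclic hA ha.1 hb.1 _ w.toPath.2 u hu,
        Subtree.path_subset hT.IsAcyclic hS₀ ha.2 hb.2 _ w.toPath.2 u hu⟩
    -- A ∩ S₀ meets every member of F'
    have hmeet' : ∀ S ∈ F', ((A ∩ S₀) ∩ S).Nonempty := by
      intro S hSF
      obtain ⟨x, hx⟩ := hmeet S₀ (Finset.mem_insert_self _ _)
      obtain ⟨y, hy⟩ := hmeet S (Finset.mem_insert_of_mem hSF)
      obtain ⟨z, hz⟩ := hpair S₀ (Finset.mem_insert_self _ _) S (Finset.mem_insert_of_mem hSF)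
      obtain ⟨m, p, q, r, hp, hq, hr, hmp, hmq, hmr⟩ := tree_median hT x y z
      have hmA : m ∈ A := Subtree.path_subset hT.IsAcyclic hA hx.1 hy.1 p hp m hmp
      have hmS₀ : m ∈ S₀ := Subtree.path_subset hT.IsAcyclic hS₀ hx.2 hz.1 q hq m hmq
      have hmS : m ∈ S :=
        Subtree.path_subset hT.IsAcyclic (hS S (Finset.mem_insert_of_mem hSF)) hy.2 hz.2 r hr m hmr
      exact ⟨m, ⟨hmA, hmS₀⟩, hmS⟩
    obtain ⟨m, hmA', hmF'⟩ := ih (A ∩ S₀) hA'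
      (fun S hSF => hS S (Finset.mem_insert_of_mem hSF)) hmeet'
      (fun S hSF S' hS'F => hpair S (Finset.mem_insert_of_mem hSF) S' (Finset.mem_insert_of_mem hS'F))
    refine ⟨m, hmA'.1, ?_⟩
    intro S hSF
    rcases Finset.mem_insert.mp hSF with rfl | hSF
    · exact hmA'.2
    · exact hmF' S hSF

section Bramble

/-- The trace of a vertex set on the decomposition tree. -/
def trace {I : Type} (B : I → Finset V) (X : Set V) : Set I := {i | ∃ v ∈ X, v ∈ B i}

variable {I : Type} {G : SimpleGraph V} {T : SimpleGraph I} {B : I → Finset V}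

lemma trace_vertex_subtree (hd : IsTreeDecomp G T B) (v : V) :
    Subtree T {i | v ∈ B i} := by
  obtain ⟨i, hi⟩ := hd.2.1 v
  refine ⟨⟨i, hi⟩, ?_⟩
  intro a ha b hb
  exact exists_walk_in_of_induce_connected (hd.2.2.2 v) ha hb

lemma trace_walk (hd : IsTreeDecomp G T B) (X : Set V) :
    ∀ {v w : V} (p : G.Walk v w), (∀ x ∈ p.support, x ∈ X) →
    ∀ i, v ∈ B i → ∀ j, w ∈ B j →
    ∃ q : T.Walk i j, ∀ x ∈ q.support, x ∈ trace B X := by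
  intro v w p
  induction p with
  | nil =>
    intro hsub i hi j hj
    obtain ⟨q, hq⟩ := (trace_vertex_subtree hd _).2 i hi j hj
    exact ⟨q, fun x hx => ⟨_, hsub _ (by simp), hq x hx⟩⟩
  | @cons v c w hadj p ih =>
    intro hsub i hi j hj
    obtain ⟨k, hvk, hck⟩ := hd.2.2.1 v c hadj
    obtain ⟨q₁, hq₁⟩ := (trace_vertex_subtree hd v).2 i hi k hvk
    obtain ⟨q₂, hq₂⟩ := ih (fun x hx => hsub x (by simp [hx])) k hck j hj
    refine ⟨q₁.append q₂, ?_⟩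
    intro x hx
    rw [SimpleGraph.Walk.mem_support_append_iff] at hx
    rcases hx with hx | hx
    · exact ⟨v, hsub v (by simp), hq₁ x hx⟩
    · exact hq₂ x hx
lemma trace_subtree (hd : IsTreeDecomp G T B) {X : Set V}
    (hX : (G.induce X).Connected) : Subtree T (trace B X) := by
  obtain ⟨⟨v, hv⟩⟩ := hX.nonempty
  obtain ⟨i₀, hi₀⟩ := hd.2.1 v
  refine ⟨⟨i₀, v, hv, hi₀⟩, ?_⟩
  rintro a ⟨u, huX, huB⟩ b ⟨w, hwX, hwB⟩
  obtain ⟨p, hp⟩ := exists_walk_in_of_induce_connected hX huX hwX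
  exact trace_walk hd X p hp a huB b hwB

theorem exists_bag_hitting (hd : IsTreeDecomp G T B) (𝓑 : Finset (Set V))
    (hconn : ∀ X ∈ 𝓑, (G.induce X).Connected)
    (htouch : ∀ X ∈ 𝓑, ∀ Y ∈ 𝓑, ∃ a ∈ X, ∃ b ∈ Y, a = b ∨ G.Adj a b) :
    ∃ i : I, ∀ X ∈ 𝓑, ∃ v ∈ X, v ∈ B i := by
  classical
  have hIne : Nonempty I := hd.1.isConnected.nonempty
  rcases 𝓑.eq_empty_or_nonempty with rfl | ⟨X₀, hX₀⟩
  · exact ⟨Classical.arbitrary I, by simp⟩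
  have key : ∀ X ∈ 𝓑, ∀ Y ∈ 𝓑, (trace B X ∩ trace B Y).Nonempty := by
    intro X hX Y hY
    obtain ⟨a, ha, b, hb, hab⟩ := htouch X hX Y hY
    rcases hab with rfl | hab
    · obtain ⟨k, hk⟩ := hd.2.1 a
      exact ⟨k, ⟨a, ha, hk⟩, ⟨a, hb, hk⟩⟩
    · obtain ⟨k, hak, hbk⟩ := hd.2.2.1 a b hab
      exact ⟨k, ⟨a, ha, hak⟩, ⟨b, hb, hbk⟩⟩
  obtain ⟨m, hmA, hmF⟩ := tree_helly hd.1 (𝓑.image (trace B)) (trace B X₀)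
    (trace_subtree hd (hconn X₀ hX₀))
    (by rintro S hS
        obtain ⟨X, hX, rfl⟩ := Finset.mem_image.mp hS
        exact trace_subtree hd (hconn X hX))
    (by rintro S hS
        obtain ⟨X, hX, rfl⟩ := Finset.mem_image.mp hS
        exact key X₀ hX₀ X hX)
    (by rintro S hS S' hS'
        obtain ⟨X, hX, rfl⟩ := Finset.mem_image.mp hS
        obtain ⟨Y, hY, rfl⟩ := Finset.mem_image.mp hS'
        exact key X hX Y hY)
  refine ⟨m, ?_⟩
  intro X hX
  exact hmF (trace B X) (Finset.mem_image_of_mem _ hX)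
end Bramble

/-- The one-way infinite path graph on `ℕ`. -/
def pathN : SimpleGraph ℕ := SimpleGraph.fromRel (fun a b => b = a + 1)

lemma pathN_adj {a b : ℕ} : pathN.Adj a b ↔ a ≠ b ∧ (b = a + 1 ∨ a = b + 1) := by
  simp [pathN, SimpleGraph.fromRel_adj]

lemma pathN_adj_succ (a : ℕ) : pathN.Adj a (a + 1) := by
  rw [pathN_adj]; omega

lemma pathN_walkUp : ∀ d (a b : ℕ), a + d = b →
    ∃ w : pathN.Walk a b, ∀ x ∈ w.support, a ≤ x ∧ x ≤ b := by
  intro d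
  induction d with
  | zero =>
    intro a b hab
    obtain rfl : a = b := by omega
    exact ⟨SimpleGraph.Walk.nil, by simp⟩
  | succ d ih =>
    intro a b hab
    obtain ⟨w, hw⟩ := ih (a + 1) b (by omega)
    refine ⟨SimpleGraph.Walk.cons (pathN_adj_succ a) w, ?_⟩
    intro x hx
    rw [SimpleGraph.Walk.support_cons, List.mem_cons] at hx
    rcases hx with rfl | hx
    · omega
    · have := hw x hx; omega

lemma pathN_reachable (a b : ℕ) : pathN.Reachable a b := by
  rcases le_total a b with h | h
  · obtain ⟨w, _⟩ := pathN_walkUp (b - a) a b (by omega)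
    exact ⟨w⟩
  · obtain ⟨w, _⟩ := pathN_walkUp (a - b) b a (by omega)
    exact SimpleGraph.Reachable.symm ⟨w⟩

lemma pathN_connected : pathN.Connected := by
  rw [SimpleGraph.connected_iff]
  exact ⟨fun a b => pathN_reachable a b, ⟨0⟩⟩

lemma pathN_no_cross {u : ℕ} :
    ∀ {a c : ℕ}, (pathN \ SimpleGraph.fromEdgeSet {s(u, u + 1)}).Walk a c → a ≤ u → c ≤ u := by
  intro a c w
  induction w with
  | nil => exact fun h => h
  | @cons a d c hadj w ih =>
    intro ha
    apply ih
    rw [SimpleGraph.sdiff_adj, SimpleGraph.fromEdgeSet_adj] at hadj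
    obtain ⟨hadj', hne⟩ := hadj
    rw [pathN_adj] at hadj'
    have hs : ¬(s(a, d) = s(u, u + 1)) := fun h => hne ⟨Set.mem_singleton_iff.mpr h, hadj'.1⟩
    rw [Sym2.eq_iff] at hs
    omega

lemma pathN_isBridge (u : ℕ) : pathN.IsBridge s(u, u + 1) := by
  rw [SimpleGraph.isBridge_iff]
  rintro ⟨w⟩
  have := pathN_no_cross w le_rfl
  omega

lemma pathN_isTree : pathN.IsTree := by
  constructor
  · exact pathN_connected
  · rw [SimpleGraph.isAcyclic_iff_forall_adj_isBridge]
    intro a b hab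
    rw [pathN_adj] at hab
    obtain ⟨hne, hd | hd⟩ := hab
    · subst hd; exact pathN_isBridge a
    · subst hd; rw [Sym2.eq_swap]; exact pathN_isBridge b

lemma pathN_induce_convex_connected {S : Set ℕ} (hne : S.Nonempty)
    (hconv : ∀ a ∈ S, ∀ b ∈ S, ∀ c, a ≤ c → c ≤ b → c ∈ S) :
    (pathN.induce S).Connected := by
  apply induce_connected_of_walks hne
  intro a ha b hb
  rcases le_total a b with h | h
  · obtain ⟨w, hw⟩ := pathN_walkUp (b - a) a b (by omega)
    exact ⟨w, fun x hx => hconv a ha b hb x (hw x hx).1 (hw x hx).2⟩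
  · obtain ⟨w, hw⟩ := pathN_walkUp (a - b) b a (by omega)
    refine ⟨w.reverse, fun x hx => ?_⟩
    rw [SimpleGraph.Walk.support_reverse, List.mem_reverse] at hx
    exact hconv b hb a ha x (hw x hx).1 (hw x hx).2

section Upper
variable (n m : ℕ)

/-- Linear ordering of grid vertices, row by row. -/
def gnum (p : Fin n × Fin m) : ℕ := m * p.1.val + p.2.val

lemma gnum_injOn : Function.Injective (gnum n m) := by
  intro p q h
  unfold gnum at h
  have hp2 := p.2.isLt
  have hq2 := q.2.isLt
  have h1 : p.1.val = q.1.val := by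
    have := congrArg (· / m) h
    simpa [Nat.mul_add_div (by omega : 0 < m), Nat.div_eq_of_lt hp2,
      Nat.div_eq_of_lt hq2] using this
  have h3 : m * p.1.val = m * q.1.val := by rw [h1]
  have h2 : p.2.val = q.2.val := by omega
  exact Prod.ext (Fin.ext h1) (Fin.ext h2)

lemma gridGraph_adj {p q : Fin n × Fin m} : (gridGraph n m).Adj p q ↔ p ≠ q ∧
    ((p.1 = q.1 ∧ p.2.val + 1 = q.2.val) ∨ (p.2 = q.2 ∧ p.1.val + 1 = q.1.val) ∨
     (q.1 = p.1 ∧ q.2.val + 1 = p.2.val) ∨ (q.2 = p.2 ∧ q.1.val + 1 = p.1.val)) := by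
  rw [gridGraph, SimpleGraph.fromRel_adj]
  tauto

/-- The bag at time `t` of the sweep decomposition. -/
def gbag (t : ℕ) : Finset (Fin n × Fin m) :=
  Finset.univ.filter (fun v => t ≤ gnum n m v ∧ gnum n m v ≤ t + m)

lemma mem_gbag {t : ℕ} {v : Fin n × Fin m} :
    v ∈ gbag n m t ↔ t ≤ gnum n m v ∧ gnum n m v ≤ t + m := by
  simp [gbag]

theorem grid_decomp (hm : 1 ≤ m) :
    IsTreeDecomp (gridGraph n m) pathN (gbag n m) ∧ ∀ t, (gbag n m t).card ≤ m + 1 := by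
  constructor
  · refine ⟨pathN_isTree, ?_, ?_, ?_⟩
    · intro v
      exact ⟨gnum n m v, (mem_gbag n m).mpr ⟨le_rfl, by omega⟩⟩
    · intro u v hadj
      rw [gridGraph_adj] at hadj
      have hu2 := u.2.isLt
      have hv2 := v.2.isLt
      rcases hadj.2 with ⟨h1, h2⟩ | ⟨h1, h2⟩ | ⟨h1, h2⟩ | ⟨h1, h2⟩
      · refine ⟨gnum n m u, (mem_gbag n m).mpr ⟨le_rfl, by omega⟩, (mem_gbag n m).mpr ?_⟩
        have : gnum n m v = gnum n m u + 1 := by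
          unfold gnum; rw [h1]; omega
        omega
      · refine ⟨gnum n m u, (mem_gbag n m).mpr ⟨le_rfl, by omega⟩, (mem_gbag n m).mpr ?_⟩
        have : gnum n m v = gnum n m u + m := by
          unfold gnum; rw [← h1]
          have : m * v.1.val = m * u.1.val + m := by rw [← h2]; ring
          omega
        omega
      · refine ⟨gnum n m v, (mem_gbag n m).mpr ?_, (mem_gbag n m).mpr ⟨le_rfl, by omega⟩⟩
        have : gnum n m u = gnum n m v + 1 := by
          unfold gnum; rw [h1]; omega
        omega
      · refine ⟨gnum n m v, (mem_gbag n m).mpr ?_, (mem_gbag n m).mpr ⟨le_rfl, by omega⟩⟩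
        have : gnum n m u = gnum n m v + m := by
          unfold gnum; rw [h1]
          have : m * u.1.val = m * v.1.val + m := by rw [← h2]; ring
          omega
        omega
    · intro v
      apply pathN_induce_convex_connected
      · exact ⟨gnum n m v, by simp [mem_gbag]⟩
      · intro a ha b hb c hac hcb
        simp only [Set.mem_setOf_eq, mem_gbag] at ha hb ⊢
        omega
  · intro t
    have : (gbag n m t) ⊆ Finset.univ := Finset.subset_univ _
    calc (gbag n m t).card ≤ (Finset.Icc t (t + m)).card := by
          apply Finset.card_le_card_of_injOn (gnum n m)
          · intro v hv
            rw [Finset.mem_coe, mem_gbag] at hv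
            rw [Finset.mem_coe, Finset.mem_Icc]
            exact hv
          · exact fun a _ b _ h => gnum_injOn n m h
      _ = m + 1 := by rw [Nat.card_Icc]; omega
end Upper

section Segments
variable {n m : ℕ}

lemma grid_walk_right : ∀ (d : ℕ) (i : Fin n) (a b : Fin m), a.val + d = b.val →
    ∃ w : (gridGraph n m).Walk (i, a) (i, b),
      ∀ x ∈ w.support, x.1 = i ∧ a.val ≤ x.2.val ∧ x.2.val ≤ b.val := by
  intro d
  induction d with
  | zero =>
    intro i a b h
    obtain rfl : a = b := Fin.ext (by omega)
    exact ⟨SimpleGraph.Walk.nil, by simp⟩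
  | succ d ih =>
    intro i a b h
    have ha1 : a.val + 1 < m := by have := b.isLt; omega
    set a' : Fin m := ⟨a.val + 1, ha1⟩ with ha'
    have hadj : (gridGraph n m).Adj (i, a) (i, a') := by
      rw [gridGraph_adj]
      constructor
      · intro hc
        have : a = a' := congrArg Prod.snd hc
        have := congrArg Fin.val this
        simp [ha'] at this
      · left; exact ⟨rfl, by simp [ha']⟩
    obtain ⟨w, hw⟩ := ih i a' b (by show a.val + 1 + d = b.val; omega)
    refine ⟨SimpleGraph.Walk.cons hadj w, ?_⟩
    intro x hx
    rw [SimpleGraph.Walk.support_cons, List.mem_cons] at hx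
    rcases hx with rfl | hx
    · exact ⟨rfl, le_rfl, (by omega : a.val ≤ b.val)⟩
    · obtain ⟨h1, h2, h3⟩ := hw x hx
      have h2' : a.val + 1 ≤ x.2.val := h2
      exact ⟨h1, by omega, h3⟩

lemma grid_walk_down : ∀ (d : ℕ) (j : Fin m) (a b : Fin n), a.val + d = b.val →
    ∃ w : (gridGraph n m).Walk (a, j) (b, j),
      ∀ x ∈ w.support, x.2 = j ∧ a.val ≤ x.1.val ∧ x.1.val ≤ b.val := by
  intro d
  induction d with
  | zero =>
    intro j a b h
    obtain rfl : a = b := Fin.ext (by omega)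
    exact ⟨SimpleGraph.Walk.nil, by simp⟩
  | succ d ih =>
    intro j a b h
    have ha1 : a.val + 1 < n := by have := b.isLt; omega
    set a' : Fin n := ⟨a.val + 1, ha1⟩ with ha'
    have hadj : (gridGraph n m).Adj (a, j) (a', j) := by
      rw [gridGraph_adj]
      constructor
      · intro hc
        have : a = a' := congrArg Prod.fst hc
        have := congrArg Fin.val this
        simp [ha'] at this
      · right; left; exact ⟨rfl, by simp [ha']⟩
    obtain ⟨w, hw⟩ := ih j a' b (by show a.val + 1 + d = b.val; omega)
    refine ⟨SimpleGraph.Walk.cons hadj w, ?_⟩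
    intro x hx
    rw [SimpleGraph.Walk.support_cons, List.mem_cons] at hx
    rcases hx with rfl | hx
    · exact ⟨rfl, le_rfl, (by omega : a.val ≤ b.val)⟩
    · obtain ⟨h1, h2, h3⟩ := hw x hx
      have h2' : a.val + 1 ≤ x.1.val := h2
      exact ⟨h1, by omega, h3⟩

lemma rowlike_connected (i : ℕ) (P : ℕ → Prop)
    (hne : ∃ p : Fin n × Fin m, p.1.val = i ∧ P p.2.val)
    (hconv : ∀ a b c, P a → P b → a ≤ c → c ≤ b → P c) :
    ((gridGraph n m).induce {p | p.1.val = i ∧ P p.2.val}).Connected := by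
  apply induce_connected_of_walks hne
  rintro ⟨p1, p2⟩ ⟨hp1, hp2⟩ ⟨q1, q2⟩ ⟨hq1, hq2⟩
  have hp1' : p1.val = i := hp1
  have hq1' : q1.val = i := hq1
  have hp2' : P p2.val := hp2
  have hq2' : P q2.val := hq2
  obtain rfl : p1 = q1 := Fin.ext (by omega)
  rcases le_total p2.val q2.val with h | h
  · obtain ⟨w, hw⟩ := grid_walk_right (q2.val - p2.val) p1 p2 q2 (by omega)
    refine ⟨w, fun x hx => ?_⟩
    obtain ⟨h1, h2, h3⟩ := hw x hx
    exact ⟨by rw [h1]; omega, hconv _ _ _ hp2 hq2 h2 h3⟩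
  · obtain ⟨w, hw⟩ := grid_walk_right (p2.val - q2.val) p1 q2 p2 (by omega)
    refine ⟨w.reverse, fun x hx => ?_⟩
    rw [SimpleGraph.Walk.support_reverse, List.mem_reverse] at hx
    obtain ⟨h1, h2, h3⟩ := hw x hx
    exact ⟨by rw [h1]; omega, hconv _ _ _ hq2 hp2 h2 h3⟩

lemma collike_connected (j : ℕ) (P : ℕ → Prop)
    (hne : ∃ p : Fin n × Fin m, p.2.val = j ∧ P p.1.val)
    (hconv : ∀ a b c, P a → P b → a ≤ c → c ≤ b → P c) :
    ((gridGraph n m).induce {p | p.2.val = j ∧ P p.1.val}).Connected := by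
  apply induce_connected_of_walks hne
  rintro ⟨p1, p2⟩ ⟨hp1, hp2⟩ ⟨q1, q2⟩ ⟨hq1, hq2⟩
  have hp1' : p2.val = j := hp1
  have hq1' : q2.val = j := hq1
  have hp2' : P p1.val := hp2
  have hq2' : P q1.val := hq2
  obtain rfl : p2 = q2 := Fin.ext (by omega)
  rcases le_total p1.val q1.val with h | h
  · obtain ⟨w, hw⟩ := grid_walk_down (q1.val - p1.val) p2 p1 q1 (by omega)
    refine ⟨w, fun x hx => ?_⟩
    obtain ⟨h1, h2, h3⟩ := hw x hx
    exact ⟨by rw [h1]; omega, hconv _ _ _ hp2 hq2 h2 h3⟩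
  · obtain ⟨w, hw⟩ := grid_walk_down (p1.val - q1.val) p2 q1 p1 (by omega)
    refine ⟨w.reverse, fun x hx => ?_⟩
    rw [SimpleGraph.Walk.support_reverse, List.mem_reverse] at hx
    obtain ⟨h1, h2, h3⟩ := hw x hx
    exact ⟨by rw [h1]; omega, hconv _ _ _ hq2 hp2 h2 h3⟩
end Segments

section GridBramble
variable {n m : ℕ}

def rowSeg (n m : ℕ) (i : ℕ) : Set (Fin n × Fin m) := {p | p.1.val = i ∧ p.2.val ≤ m - 2}
def colSeg (n m : ℕ) (j : ℕ) : Set (Fin n × Fin m) := {p | p.2.val = j ∧ p.1.val ≤ n - 2}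
def crossSet (n m : ℕ) (i j : ℕ) : Set (Fin n × Fin m) := rowSeg n m i ∪ colSeg n m j
def Lset (n m : ℕ) : Set (Fin n × Fin m) := {p | p.1.val = n - 1 ∧ (fun _ => True) p.2.val}
def Rset (n m : ℕ) : Set (Fin n × Fin m) := {p | p.2.val = m - 1 ∧ p.1.val ≤ n - 2}

noncomputable def gridBramble (n m : ℕ) : Finset (Set (Fin n × Fin m)) :=
  letI := Classical.decEq (Set (Fin n × Fin m))
  insert (Lset n m) (insert (Rset n m)
    (((Finset.range (n - 1)) ×ˢ (Finset.range (m - 1))).image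
      (fun ij => crossSet n m ij.1 ij.2)))

lemma mem_gridBramble {X : Set (Fin n × Fin m)} :
    X ∈ gridBramble n m ↔ X = Lset n m ∨ X = Rset n m ∨
      ∃ i < n - 1, ∃ j < m - 1, X = crossSet n m i j := by
  classical
  rw [gridBramble]
  simp only [Finset.mem_insert, Finset.mem_image, Finset.mem_product, Finset.mem_range]
  constructor
  · rintro (rfl | rfl | ⟨⟨i, j⟩, ⟨hi, hj⟩, rfl⟩)
    · exact Or.inl rfl
    · exact Or.inr (Or.inl rfl)
    · exact Or.inr (Or.inr ⟨i, hi, j, hj, rfl⟩)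
  · rintro (rfl | rfl | ⟨i, hi, j, hj, rfl⟩)
    · exact Or.inl rfl
    · exact Or.inr (Or.inl rfl)
    · exact Or.inr (Or.inr ⟨⟨i, j⟩, ⟨hi, hj⟩, rfl⟩)

variable (hm2 : 2 ≤ m) (hmn : m ≤ n)
include hm2 hmn

lemma Lset_connected : ((gridGraph n m).induce (Lset n m)).Connected :=
  rowlike_connected (n - 1) (fun _ => True)
    ⟨(⟨n - 1, by omega⟩, ⟨0, by omega⟩), rfl, trivial⟩ (by tauto)

lemma Rset_connected : ((gridGraph n m).induce (Rset n m)).Connected :=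
  collike_connected (m - 1) (fun a => a ≤ n - 2)
    ⟨(⟨0, by omega⟩, ⟨m - 1, by omega⟩), rfl, (by omega : (0:ℕ) ≤ n - 2)⟩
    (fun a b c _ hb hac hcb => by omega)

lemma crossSet_connected {i j : ℕ} (hi : i < n - 1) (hj : j < m - 1) :
    ((gridGraph n m).induce (crossSet n m i j)).Connected := by
  apply induce_union_connected
  · exact (rowlike_connected i (fun a => a ≤ m - 2)
      ⟨((⟨i, by omega⟩, ⟨0, by omega⟩) : Fin n × Fin m), rfl, (by omega : (0:ℕ) ≤ m - 2)⟩
      (fun a b c _ hb hac hcb => by omega)).preconnected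
  · exact (collike_connected j (fun a => a ≤ n - 2)
      ⟨((⟨0, by omega⟩, ⟨j, by omega⟩) : Fin n × Fin m), rfl, (by omega : (0:ℕ) ≤ n - 2)⟩
      (fun a b c _ hb hac hcb => by omega)).preconnected
  · exact ⟨(⟨i, by omega⟩, ⟨j, by omega⟩),
      ⟨rfl, (by omega : j ≤ m - 2)⟩, ⟨rfl, (by omega : i ≤ n - 2)⟩⟩

lemma gridBramble_connected : ∀ X ∈ gridBramble n m, ((gridGraph n m).induce X).Connected := by
  intro X hX
  rcases mem_gridBramble.mp hX with rfl | rfl | ⟨i, hi, j, hj, rfl⟩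
  · exact Lset_connected hm2 hmn
  · exact Rset_connected hm2 hmn
  · exact crossSet_connected hm2 hmn hi hj
end GridBramble

section Touch
variable {n m : ℕ}

lemma grid_adj_vert {i i' j : ℕ} (hi : i < n) (hi' : i' < n) (hj : j < m) (h : i + 1 = i') :
    (gridGraph n m).Adj (⟨i, hi⟩, ⟨j, hj⟩) (⟨i', hi'⟩, ⟨j, hj⟩) := by
  rw [gridGraph_adj]
  constructor
  · intro hc
    have := congrArg (fun p => p.1.val) hc
    simp only at this
    omega
  · right; left; exact ⟨rfl, h⟩

lemma grid_adj_horiz {i j j' : ℕ} (hi : i < n) (hj : j < m) (hj' : j' < m) (h : j + 1 = j') :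
    (gridGraph n m).Adj (⟨i, hi⟩, ⟨j, hj⟩) (⟨i, hi⟩, ⟨j', hj'⟩) := by
  rw [gridGraph_adj]
  constructor
  · intro hc
    have := congrArg (fun p => p.2.val) hc
    simp only at this
    omega
  · left; exact ⟨rfl, h⟩

variable (hm2 : 2 ≤ m) (hmn : m ≤ n)
include hm2 hmn

lemma touch_LR : ∃ a ∈ Lset n m, ∃ b ∈ Rset n m, a = b ∨ (gridGraph n m).Adj a b := by
  refine ⟨(⟨n - 1, by omega⟩, ⟨m - 1, by omega⟩), ⟨rfl, trivial⟩,
    (⟨n - 2, by omega⟩, ⟨m - 1, by omega⟩), ⟨rfl, (by omega : n - 2 ≤ n - 2)⟩, Or.inr ?_⟩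
  exact ((grid_adj_vert (by omega) (by omega) (by omega) (by omega : n - 2 + 1 = n - 1))).symm

lemma touch_Lcross {i j : ℕ} (hi : i < n - 1) (hj : j < m - 1) :
    ∃ a ∈ Lset n m, ∃ b ∈ crossSet n m i j, a = b ∨ (gridGraph n m).Adj a b := by
  refine ⟨(⟨n - 1, by omega⟩, ⟨j, by omega⟩), ⟨rfl, trivial⟩,
    (⟨n - 2, by omega⟩, ⟨j, by omega⟩), Or.inr ⟨rfl, (by omega : n - 2 ≤ n - 2)⟩, Or.inr ?_⟩
  exact ((grid_adj_vert (by omega) (by omega) (by omega) (by omega : n - 2 + 1 = n - 1))).symm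

lemma touch_Rcross {i j : ℕ} (hi : i < n - 1) (hj : j < m - 1) :
    ∃ a ∈ Rset n m, ∃ b ∈ crossSet n m i j, a = b ∨ (gridGraph n m).Adj a b := by
  refine ⟨(⟨i, by omega⟩, ⟨m - 1, by omega⟩), ⟨rfl, (by omega : i ≤ n - 2)⟩,
    (⟨i, by omega⟩, ⟨m - 2, by omega⟩), Or.inl ⟨rfl, (by omega : m - 2 ≤ m - 2)⟩, Or.inr ?_⟩
  exact ((grid_adj_horiz (by omega) (by omega) (by omega) (by omega : m - 2 + 1 = m - 1))).symm

lemma touch_crosscross {i j i' j' : ℕ} (hi : i < n - 1) (hj : j < m - 1)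
    (hi' : i' < n - 1) (hj' : j' < m - 1) :
    ∃ a ∈ crossSet n m i j, ∃ b ∈ crossSet n m i' j', a = b ∨ (gridGraph n m).Adj a b := by
  refine ⟨(⟨i, by omega⟩, ⟨j', by omega⟩), Or.inl ⟨rfl, (by omega : j' ≤ m - 2)⟩,
    (⟨i, by omega⟩, ⟨j', by omega⟩), Or.inr ⟨rfl, (by omega : i ≤ n - 2)⟩, Or.inl rfl⟩

lemma touch_symm {X Y : Set (Fin n × Fin m)}
    (h : ∃ a ∈ X, ∃ b ∈ Y, a = b ∨ (gridGraph n m).Adj a b) :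
    ∃ a ∈ Y, ∃ b ∈ X, a = b ∨ (gridGraph n m).Adj a b := by
  obtain ⟨a, ha, b, hb, hab⟩ := h
  exact ⟨b, hb, a, ha, by rcases hab with rfl | hab; exact Or.inl rfl; exact Or.inr hab.symm⟩

lemma gridBramble_touch : ∀ X ∈ gridBramble n m, ∀ Y ∈ gridBramble n m,
    ∃ a ∈ X, ∃ b ∈ Y, a = b ∨ (gridGraph n m).Adj a b := by
  intro X hX Y hY
  rcases mem_gridBramble.mp hX with rfl | rfl | ⟨i, hi, j, hj, rfl⟩ <;>
    rcases mem_gridBramble.mp hY with rfl | rfl | ⟨i', hi', j', hj', rfl⟩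
  · exact ⟨(⟨n - 1, by omega⟩, ⟨0, by omega⟩), ⟨rfl, trivial⟩,
      (⟨n - 1, by omega⟩, ⟨0, by omega⟩), ⟨rfl, trivial⟩, Or.inl rfl⟩
  · exact touch_LR hm2 hmn
  · exact touch_Lcross hm2 hmn hi' hj'
  · exact touch_symm hm2 hmn (touch_LR hm2 hmn)
  · exact ⟨(⟨0, by omega⟩, ⟨m - 1, by omega⟩), ⟨rfl, (by omega : (0:ℕ) ≤ n - 2)⟩,
      (⟨0, by omega⟩, ⟨m - 1, by omega⟩), ⟨rfl, (by omega : (0:ℕ) ≤ n - 2)⟩, Or.inl rfl⟩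
  · exact touch_Rcross hm2 hmn hi' hj'
  · exact touch_symm hm2 hmn (touch_Lcross hm2 hmn hi hj)
  · exact touch_symm hm2 hmn (touch_Rcross hm2 hmn hi hj)
  · exact touch_crosscross hm2 hmn hi hj hi' hj'
end Touch

section Hitting
variable {n m : ℕ} (hm2 : 2 ≤ m) (hmn : m ≤ n)
include hm2 hmn

lemma gridBramble_hit_card (H : Finset (Fin n × Fin m))
    (hhit : ∀ X ∈ gridBramble n m, ∃ v ∈ X, v ∈ H) : m + 1 ≤ H.card := by
  classical
  by_contra hlt
  push_neg at hlt
  have hHcard : H.card ≤ m := by omega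
  obtain ⟨p, hpL, hpH⟩ := hhit (Lset n m) (mem_gridBramble.mpr (Or.inl rfl))
  obtain ⟨q, hqR, hqH⟩ := hhit (Rset n m) (mem_gridBramble.mpr (Or.inr (Or.inl rfl)))
  have hpL1 : p.1.val = n - 1 := hpL.1
  have hqR1 : q.2.val = m - 1 := hqR.1
  have hqR2 : q.1.val ≤ n - 2 := hqR.2
  set H' : Finset (Fin n × Fin m) :=
    H.filter (fun v => v.1.val ≤ n - 2 ∧ v.2.val ≤ m - 2) with hH'
  have hpq : p ≠ q := by
    intro h; rw [h] at hpL1; omega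
  have hpH' : p ∉ H' := by
    rw [hH', Finset.mem_filter]; rintro ⟨-, h1, -⟩; omega
  have hqH' : q ∉ H' := by
    rw [hH', Finset.mem_filter]; rintro ⟨-, -, h2⟩
    have := q.2.isLt; omega
  have hsub : H' ⊆ (H.erase p).erase q := by
    intro v hv
    rw [Finset.mem_erase, Finset.mem_erase]
    refine ⟨fun h => hqH' (h ▸ hv), fun h => hpH' (h ▸ hv), (Finset.mem_filter.mp hv).1⟩
  have hqe : q ∈ H.erase p := Finset.mem_erase.mpr ⟨fun h => hpq h.symm, hqH⟩
  have hH'card : H'.card ≤ m - 2 := by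
    have h1 := Finset.card_le_card hsub
    rw [Finset.card_erase_of_mem hqe, Finset.card_erase_of_mem hpH] at h1
    omega
  -- find a row and a column not used by H'
  set rows := H'.image (fun v => v.1.val) with hrows
  set cols := H'.image (fun v => v.2.val) with hcols
  have hrowsc : rows.card ≤ m - 2 := le_trans (Finset.card_image_le) hH'card
  have hcolsc : cols.card ≤ m - 2 := le_trans (Finset.card_image_le) hH'card
  have hrsub : ¬ (Finset.range (n - 1) ⊆ rows) := by
    intro hs
    have := Finset.card_le_card hs
    rw [Finset.card_range] at this
    omega
  have hcsub : ¬ (Finset.range (m - 1) ⊆ cols) := by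
    intro hs
    have := Finset.card_le_card hs
    rw [Finset.card_range] at this
    omega
  obtain ⟨i0, hi0r, hi0⟩ := Finset.not_subset.mp hrsub
  obtain ⟨j0, hj0r, hj0⟩ := Finset.not_subset.mp hcsub
  rw [Finset.mem_range] at hi0r hj0r
  obtain ⟨h, hhc, hhH⟩ := hhit (crossSet n m i0 j0)
    (mem_gridBramble.mpr (Or.inr (Or.inr ⟨i0, hi0r, j0, hj0r, rfl⟩)))
  rcases hhc with ⟨h1, h2⟩ | ⟨h1, h2⟩
  · have hmem : h ∈ H' := by
      rw [hH', Finset.mem_filter]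
      exact ⟨hhH, by omega, h2⟩
    exact hi0 (Finset.mem_image.mpr ⟨h, hmem, h1⟩)
  · have hmem : h ∈ H' := by
      rw [hH', Finset.mem_filter]
      exact ⟨hhH, h2, by omega⟩
    exact hj0 (Finset.mem_image.mpr ⟨h, hmem, h1⟩)

theorem grid_bag_lower {I : Type} {T : SimpleGraph I} {B : I → Finset (Fin n × Fin m)}
    (hd : IsTreeDecomp (gridGraph n m) T B) : ∃ i, m + 1 ≤ (B i).card := by
  obtain ⟨i, hi⟩ := exists_bag_hitting hd (gridBramble n m)
    (gridBramble_connected hm2 hmn) (gridBramble_touch hm2 hmn)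
  exact ⟨i, gridBramble_hit_card hm2 hmn (B i) hi⟩
end Hitting

section Assembly

lemma isTreeDecomp_of_iso {V W I : Type} {G : SimpleGraph V} {H : SimpleGraph W}
    (e : G ≃g H) {T : SimpleGraph I} {B : I → Finset W} (hd : IsTreeDecomp H T B) :
    IsTreeDecomp G T (fun i => letI := Classical.decEq V; (B i).image ⇑e.symm) := by
  classical
  have hmem : ∀ (i : I) (v : V),
      (v ∈ (letI := Classical.decEq V; (B i).image ⇑e.symm)) ↔ e v ∈ B i := by
    intro i v
    simp only [Finset.mem_image]
    constructor
    · rintro ⟨w, hw, rfl⟩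
      rwa [RelIso.apply_symm_apply]
    · intro h
      exact ⟨e v, h, e.symm_apply_apply v⟩
  refine ⟨hd.1, ?_, ?_, ?_⟩
  · intro v
    obtain ⟨i, hi⟩ := hd.2.1 (e v)
    exact ⟨i, (hmem i v).mpr hi⟩
  · intro u v hadj
    obtain ⟨i, hu, hv⟩ := hd.2.2.1 (e u) (e v) (e.map_adj_iff.mpr hadj)
    exact ⟨i, (hmem i u).mpr hu, (hmem i v).mpr hv⟩
  · intro v
    have hset : {i : I | v ∈ (letI := Classical.decEq V; (B i).image ⇑e.symm)}
        = {i : I | e v ∈ B i} := by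
      ext i; exact hmem i v
    rw [hset]
    exact hd.2.2.2 (e v)

lemma treewidth_eq_of_iso {V W : Type} {G : SimpleGraph V} {H : SimpleGraph W}
    (e : G ≃g H) : treewidth G = treewidth H := by
  classical
  unfold treewidth
  congr 1
  ext k
  simp only [Set.mem_setOf_eq]
  constructor
  · rintro ⟨I, T, B, hd, hcard⟩
    refine ⟨I, T, _, isTreeDecomp_of_iso e.symm hd, fun i => ?_⟩
    exact le_trans (Finset.card_image_le) (hcard i)
  · rintro ⟨I, T, B, hd, hcard⟩
    refine ⟨I, T, _, isTreeDecomp_of_iso e hd, fun i => ?_⟩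
    exact le_trans (Finset.card_image_le) (hcard i)

def gridSwapIso (n m : ℕ) : gridGraph n m ≃g gridGraph m n where
  toEquiv := Equiv.prodComm (Fin n) (Fin m)
  map_rel_iff' := by
    intro p q
    simp only [gridGraph, SimpleGraph.fromRel_adj, Equiv.prodComm_apply, Prod.fst_swap,
      Prod.snd_swap, ne_eq, Prod.ext_iff]
    constructor
    · rintro ⟨h1, h2⟩
      exact ⟨fun hc => h1 ⟨hc.2, hc.1⟩, by tauto⟩
    · rintro ⟨h1, h2⟩
      exact ⟨fun hc => h1 ⟨hc.2, hc.1⟩, by tauto⟩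

theorem treewidth_grid_eq_of_le {m n : ℕ} (hm1 : 1 ≤ m) (hmn : m ≤ n) (hn2 : 2 ≤ n) :
    treewidth (gridGraph n m) = m := by
  have hmemS : m ∈ {k : ℕ | ∃ (I : Type) (T : SimpleGraph I) (B : I → Finset (Fin n × Fin m)),
      IsTreeDecomp (gridGraph n m) T B ∧ ∀ i : I, (B i).card ≤ k + 1} :=
    ⟨ℕ, pathN, gbag n m, (grid_decomp n m hm1).1, (grid_decomp n m hm1).2⟩
  apply le_antisymm
  · exact Nat.sInf_le hmemS
  · apply le_csInf ⟨m, hmemS⟩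
    rintro k ⟨I, T, B, hd, hcard⟩
    by_cases hm2 : 2 ≤ m
    · obtain ⟨i, hi⟩ := grid_bag_lower hm2 hmn hd
      have := hcard i
      omega
    · have hm1' : m = 1 := by omega
      subst hm1'
      have hadj : (gridGraph n 1).Adj (⟨0, by omega⟩, ⟨0, by omega⟩) (⟨1, by omega⟩, ⟨0, by omega⟩) :=
        grid_adj_vert (by omega) (by omega) (by omega) rfl
      obtain ⟨i, hu, hv⟩ := hd.2.2.1 _ _ hadj
      have hne : ((⟨0, by omega⟩, ⟨0, by omega⟩) : Fin n × Fin 1)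
          ≠ (⟨1, by omega⟩, ⟨0, by omega⟩) := hadj.ne
      have h2 : 2 ≤ (B i).card := Finset.one_lt_card.mpr ⟨_, hu, _, hv, hne⟩
      have := hcard i
      omega

end Assembly

theorem treewidth_gridGraph' (m n : ℕ) (hm : 1 ≤ m) (hn : 1 ≤ n)
    (h : (m, n) ≠ (1, 1)) :
    treewidth (gridGraph n m) = min m n := by
  rcases le_or_gt m n with hmn | hnm
  · have hn2 : 2 ≤ n := by
      rcases Nat.lt_or_ge n 2 with h1 | h1
      · exfalso; apply h
        have : n = 1 := by omega
        have : m = 1 := by omega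
        simp_all
      · exact h1
    rw [min_eq_left hmn]
    exact treewidth_grid_eq_of_le hm hmn hn2
  · rw [min_eq_right (le_of_lt hnm)]
    rw [treewidth_eq_of_iso (gridSwapIso n m)]
    exact treewidth_grid_eq_of_le hn (le_of_lt hnm) (by omega)

/-- For all `m, n ≥ 1` with `(m, n) ≠ (1, 1)`, the treewidth of the `n × m`
two-dimensional planar grid graph equals `min m n`. -/
theorem treewidth_gridGraph (m n : ℕ) (hm : 1 ≤ m) (hn : 1 ≤ n)
    (h : (m, n) ≠ (1, 1)) :
    treewidth (gridGraph n m) = min m n :=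
  treewidth_gridGraph' m n hm hn h
end

section
/- For every m ≥ 1 and c ≥ 1, the treewidth of the hardware graph F(m,c) is at most cm + c − 1: τ(F(m,c)) ≤ cm + c − 1; equivalently, F(m,c) admits a tree decomposition of width cm + c − 1. -/
open SimpleGraph

section
variable {I : Type} (p : I → I)

def parGraph : SimpleGraph I := SimpleGraph.fromRel (fun i j => p i = j)

lemma parGraph_adj (i j : I) :
    (parGraph p).Adj i j ↔ i ≠ j ∧ (p i = j ∨ p j = i) := by
  simp [parGraph, SimpleGraph.fromRel_adj]

lemma reach_closed {V : Type*} (G : SimpleGraph V) (S : Set V)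
    (hS : ∀ x ∈ S, ∀ y, G.Adj x y → y ∈ S) {u v : V} (h : G.Reachable u v) (hu : u ∈ S) :
    v ∈ S := by
  obtain ⟨w⟩ := h
  induction w with
  | nil => exact hu
  | cons hadj _ ih => exact ih (hS _ hu _ hadj)

variable (h : I → ℕ) (root : I) (hroot : p root = root)
  (hdec : ∀ i, i ≠ root → h (p i) < h i)

include hroot hdec in
lemma parGraph_bridge (i j : I) (hij : p i = j) (hne : i ≠ j) :
    (parGraph p).IsBridge s(i, j) := by
  have hple : ∀ z, h (p z) ≤ h z := by
    intro z
    by_cases hz : z = root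
    · rw [hz, hroot]
    · exact le_of_lt (hdec z hz)
  have hadj : (parGraph p).Adj i j := by rw [parGraph_adj]; exact ⟨hne, Or.inl hij⟩
  rw [SimpleGraph.isBridge_iff]
  refine fun hreach => ?_
  set S : Set I := {x | ∃ k, p^[k] x = i} with hS
  have hiS : i ∈ S := ⟨0, rfl⟩
  have hclosed : ∀ x ∈ S, ∀ y, ((parGraph p) \ fromEdgeSet {s(i, j)}).Adj x y → y ∈ S := by
    rintro x ⟨k, hk⟩ y hxy
    rw [SimpleGraph.sdiff_adj, SimpleGraph.fromEdgeSet_adj] at hxy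
    obtain ⟨hxy1, hxy2⟩ := hxy
    have hxny : x ≠ y := hxy1.ne
    have hxyne : s(x, y) ≠ s(i, j) := fun hh => hxy2 ⟨by simp [hh], hxny⟩
    rw [parGraph_adj] at hxy1
    rcases hxy1.2 with hpx | hpy
    · by_cases hxi : x = i
      · exfalso; apply hxyne; subst hxi; rw [hij] at hpx; rw [hpx]
      · rcases k with _ | k'
        · exact absurd hk hxi
        · refine ⟨k', ?_⟩
          rw [Function.iterate_succ_apply, hpx] at hk
          exact hk
    · exact ⟨k + 1, by rw [Function.iterate_succ_apply, hpy]; exact hk⟩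
  have hjS : j ∈ S := reach_closed _ S hclosed hreach hiS
  obtain ⟨k, hk⟩ := hjS
  have hmono : ∀ n (x : I), h (p^[n] x) ≤ h x := by
    intro n
    induction n with
    | zero => intro x; rfl
    | succ n ih =>
      intro x
      rw [Function.iterate_succ_apply']
      exact le_trans (hple _) (ih x)
  have h1 : h j < h i := by
    have : i ≠ root := fun hr => hne (by rw [hr, ← hij, hr, hroot])
    have := hdec i this
    rwa [hij] at this
  have := hmono k j
  rw [hk] at this
  omega

include hroot hdec in
lemma parGraph_isAcyclic : (parGraph p).IsAcyclic := by
  rw [isAcyclic_iff_forall_adj_isBridge]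
  intro v w hvw
  have h2 := hvw
  rw [parGraph_adj] at h2
  rcases h2.2 with hp | hp
  · exact parGraph_bridge p h root hroot hdec v w hp h2.1
  · rw [Sym2.eq_swap]
    exact parGraph_bridge p h root hroot hdec w v hp (Ne.symm h2.1)
end

lemma parGraph_induce_connected {I : Type} (p : I → I) (h : I → ℕ) (s : Set I) (w : I)
    (hw : w ∈ s) (hcl : ∀ i ∈ s, i ≠ w → p i ∈ s ∧ h (p i) < h i) :
    ((parGraph p).induce s).Connected := by
  have key : ∀ n (i : I) (hi : i ∈ s), h i ≤ n →
      ((parGraph p).induce s).Reachable ⟨i, hi⟩ ⟨w, hw⟩ := by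
    intro n
    induction n with
    | zero =>
      intro i hi hin
      by_cases hiw : i = w
      · subst hiw; rfl
      · exact absurd (hcl i hi hiw).2 (by omega)
    | succ n ih =>
      intro i hi hin
      by_cases hiw : i = w
      · subst hiw; rfl
      · obtain ⟨hp, hlt⟩ := hcl i hi hiw
        have hadj : ((parGraph p).induce s).Adj ⟨i, hi⟩ ⟨p i, hp⟩ := by
          show (parGraph p).Adj i (p i)
          rw [parGraph_adj]
          exact ⟨fun he => by rw [← he] at hlt; omega, Or.inl rfl⟩
        exact hadj.reachable.trans (ih (p i) hp (by omega))
  rw [SimpleGraph.connected_iff]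
  refine ⟨?_, ⟨⟨w, hw⟩⟩⟩
  rintro ⟨i, hi⟩ ⟨j, hj⟩
  exact (key (h i) i hi le_rfl).trans (key (h j) j hj le_rfl).symm

lemma parGraph_connected' {I : Type} (p : I → I) (h : I → ℕ) (root : I)
    (hdec : ∀ i, i ≠ root → h (p i) < h i) : (parGraph p).Connected := by
  have key : ∀ n (i : I), h i ≤ n → (parGraph p).Reachable i root := by
    intro n
    induction n with
    | zero =>
      intro i hin
      by_cases hiw : i = root
      · subst hiw; rfl
      · exact absurd (hdec i hiw) (by omega)
    | succ n ih =>
      intro i hin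
      by_cases hiw : i = root
      · subst hiw; rfl
      · have hlt := hdec i hiw
        have hadj : (parGraph p).Adj i (p i) := by
          rw [parGraph_adj]; exact ⟨fun he => by rw [← he] at hlt; omega, Or.inl rfl⟩
        exact hadj.reachable.trans (ih (p i) (by omega))
  rw [SimpleGraph.connected_iff]
  refine ⟨?_, ⟨root⟩⟩
  intro i j
  exact (key (h i) i le_rfl).trans (key (h j) j le_rfl).symm

def hwPar {m : ℕ} (i : Fin m × Fin m × Bool) : Fin m × Fin m × Bool :=
  match i with
  | (a, b, true) =>
      if b.val = 0 then (a, b, false)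
      else (a, ⟨b.val - 1, lt_of_le_of_lt (Nat.sub_le _ _) b.isLt⟩, true)
  | (a, b, false) =>
      if b.val = 0 then
        if a.val = 0 then (a, b, false)
        else (⟨a.val - 1, lt_of_le_of_lt (Nat.sub_le _ _) a.isLt⟩,
              ⟨m - 1, Nat.sub_lt a.pos one_pos⟩, false)
      else (a, ⟨b.val - 1, lt_of_le_of_lt (Nat.sub_le _ _) b.isLt⟩, false)

def hwH {m : ℕ} (i : Fin m × Fin m × Bool) : ℕ :=
  2 * m * i.1.val + i.2.1.val + (if i.2.2 then m else 0)

def hwRoot (m : ℕ) (hm : 1 ≤ m) : Fin m × Fin m × Bool := (⟨0, hm⟩, ⟨0, hm⟩, false)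

lemma hwPar_root {m : ℕ} (hm : 1 ≤ m) : hwPar (hwRoot m hm) = hwRoot m hm := by
  simp [hwPar, hwRoot]

lemma hwPar_dec {m : ℕ} (hm : 1 ≤ m) :
    ∀ i, i ≠ hwRoot m hm → hwH (hwPar i) < hwH i := by
  rintro ⟨a, b, k⟩ hne
  have ha := a.isLt
  have hb := b.isLt
  cases k with
  | true =>
    by_cases hb0 : b.val = 0
    · simp only [hwPar, hb0, if_pos rfl, hwH]
      simp [hb0]
      omega
    · simp only [hwPar, if_neg hb0, hwH]
      simp
      omega
  | false =>
    by_cases hb0 : b.val = 0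
    · by_cases ha0 : a.val = 0
      · exfalso
        apply hne
        simp [hwRoot, Prod.ext_iff, Fin.ext_iff]
        omega
      · simp only [hwPar, if_pos hb0, if_neg ha0, hwH]
        simp
        have hmul : 2 * m * a.val = 2 * m * (a.val - 1) + 2 * m := by
          have h1 : a.val - 1 + 1 = a.val := by omega
          rw [← h1, Nat.mul_add, Nat.mul_one, h1]
        omega
    · simp only [hwPar, if_neg hb0, hwH]
      simp
      omega

def hwMem (m c : ℕ) : Fin m × Fin m × Bool → Fin m × Fin m × Fin (2 * c) → Prop
  | (a, b, false), (a', b', d) =>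
      d.val < c ∧ ((a' = a ∧ b.val ≤ b'.val) ∨ (a'.val = a.val + 1 ∧ b'.val ≤ b.val))
  | (a, b, true), (a', b', d) =>
      (d.val < c ∧ a' = a ∧ b.val ≤ b'.val) ∨
      (c ≤ d.val ∧ a' = a ∧ (b'.val = b.val ∨ b'.val + 1 = b.val))

noncomputable def hwBag (m c : ℕ) (i : Fin m × Fin m × Bool) :
    Finset (Fin m × Fin m × Fin (2 * c)) :=
  @Finset.filter _ (hwMem m c i) (Classical.decPred _) Finset.univ

lemma hwBag_mem {m c : ℕ} (i : Fin m × Fin m × Bool) (v : Fin m × Fin m × Fin (2 * c)) :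
    v ∈ hwBag m c i ↔ hwMem m c i v := by
  simp [hwBag, Finset.mem_filter]

lemma hwBag_card {m c : ℕ} (hm : 1 ≤ m) (hc : 1 ≤ c) (i : Fin m × Fin m × Bool) :
    (hwBag m c i).card ≤ c * m + c := by
  have hle : ((Finset.range (m + 1)) ×ˢ (Finset.range c)).card = c * m + c := by
    rw [Finset.card_product, Finset.card_range, Finset.card_range]
    ring
  rw [← hle]
  obtain ⟨a, b, k⟩ := i
  cases k with
  | false =>
    apply Finset.card_le_card_of_injOn
      (fun v => (if v.1 = a then v.2.1.val + 1 else v.2.1.val, v.2.2.val))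
    · rintro ⟨a', b', d⟩ hv
      rw [Finset.mem_coe, hwBag_mem] at hv
      simp only [hwMem] at hv
      simp only [Finset.mem_coe, Finset.mem_product, Finset.mem_range]
      have := b'.isLt
      constructor
      · split <;> omega
      · exact hv.1
    · rintro ⟨a1, b1, d1⟩ h1 ⟨a2, b2, d2⟩ h2 heq
      rw [Finset.mem_coe, hwBag_mem] at h1 h2
      simp only [hwMem] at h1 h2
      simp only [Prod.mk.injEq] at heq ⊢
      obtain ⟨hd1, hm1⟩ := h1
      obtain ⟨hd2, hm2⟩ := h2
      obtain ⟨he1, he2⟩ := heq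
      have hb1 := b1.isLt
      have hb2 := b2.isLt
      by_cases g1 : a1 = a <;> by_cases g2 : a2 = a <;>
        simp only [if_pos, if_neg, g1, g2, if_true, if_false] at he1
      · subst g1; subst g2
        refine ⟨rfl, Fin.ext (by omega), Fin.ext (by omega)⟩
      · exfalso
        subst g1
        rcases hm2 with ⟨hm2a, _⟩ | ⟨hm2a, hm2b⟩
        · exact g2 hm2a
        · rcases hm1 with ⟨_, hm1b⟩ | ⟨hm1a, _⟩
          · omega
          · omega
      · exfalso
        subst g2
        rcases hm1 with ⟨hm1a, _⟩ | ⟨hm1a, hm1b⟩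
        · exact g1 hm1a
        · rcases hm2 with ⟨_, hm2b⟩ | ⟨hm2a, _⟩
          · omega
          · omega
      · rcases hm1 with ⟨hm1a, _⟩ | ⟨hm1a, hm1b⟩
        · exact absurd hm1a g1
        · rcases hm2 with ⟨hm2a, _⟩ | ⟨hm2a, hm2b⟩
          · exact absurd hm2a g2
          · refine ⟨Fin.ext (by omega), Fin.ext (by omega), Fin.ext (by omega)⟩
  | true =>
    apply Finset.card_le_card_of_injOn
      (fun v => (if v.2.2.val < c then v.2.1.val + 1 else (if v.2.1 = b then 0 else 1),
                 if v.2.2.val < c then v.2.2.val else v.2.2.val - c))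
    · rintro ⟨a', b', d⟩ hv
      rw [Finset.mem_coe, hwBag_mem] at hv
      simp only [hwMem] at hv
      simp only [Finset.mem_coe, Finset.mem_product, Finset.mem_range]
      have hb' := b'.isLt
      have hd := d.isLt
      constructor
      · split
        · omega
        · split <;> omega
      · split <;> omega
    · rintro ⟨a1, b1, d1⟩ h1 ⟨a2, b2, d2⟩ h2 heq
      rw [Finset.mem_coe, hwBag_mem] at h1 h2
      simp only [hwMem] at h1 h2
      simp only [Prod.mk.injEq] at heq ⊢
      obtain ⟨he1, he2⟩ := heq
      have hd1 := d1.isLt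
      have hd2 := d2.isLt
      by_cases g1 : d1.val < c <;> by_cases g2 : d2.val < c <;>
        simp only [g1, g2, if_true, if_false, if_pos, if_neg] at he1 he2
      · rcases h1 with ⟨_, ha1, hb1⟩ | ⟨hc1, _⟩
        · rcases h2 with ⟨_, ha2, hb2⟩ | ⟨hc2, _⟩
          · exact ⟨ha1.trans ha2.symm, Fin.ext (by omega), Fin.ext (by omega)⟩
          · omega
        · omega
      · exfalso
        rcases h1 with ⟨_, _, hb1⟩ | ⟨hc1, _⟩
        · rcases h2 with ⟨hc2, _⟩ | ⟨_, _, hb2⟩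
          · omega
          · by_cases gb : b2 = b
            · rw [if_pos gb] at he1; omega
            · rw [if_neg gb] at he1
              have : b2.val ≠ b.val := fun hh => gb (Fin.ext hh)
              omega
        · omega
      · exfalso
        rcases h2 with ⟨_, _, hb2⟩ | ⟨hc2, _⟩
        · rcases h1 with ⟨hc1, _⟩ | ⟨_, _, hb1⟩
          · omega
          · by_cases gb : b1 = b
            · rw [if_pos gb] at he1; omega
            · rw [if_neg gb] at he1
              have : b1.val ≠ b.val := fun hh => gb (Fin.ext hh)
              omega
        · omega
      · rcases h1 with ⟨hcc, _⟩ | ⟨hc1, ha1, hb1⟩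
        · omega
        · rcases h2 with ⟨hcc, _⟩ | ⟨hc2, ha2, hb2⟩
          · omega
          · have key : b1 = b2 := by
              by_cases gb1 : b1 = b <;> by_cases gb2 : b2 = b <;>
                simp only [gb1, gb2, if_true, if_false, if_pos, if_neg] at he1
              · exact gb1.trans gb2.symm
              · omega
              · omega
              · have h1' : b1.val ≠ b.val := fun hh => gb1 (Fin.ext hh)
                have h2' : b2.val ≠ b.val := fun hh => gb2 (Fin.ext hh)
                rcases hb1 with h | h <;> rcases hb2 with h' | h' <;>
                  first | omega | exact Fin.ext (by omega)
            exact ⟨ha1.trans ha2.symm, key, Fin.ext (by omega)⟩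

/-- For every `m ≥ 1` and `c ≥ 1`, the treewidth of the hardware graph
`F(m, c)` is at most `c * m + c - 1`. -/
theorem treewidth_hardwareGraph_le (m c : ℕ) (hm : 1 ≤ m) (hc : 1 ≤ c) :
    treewidth (hardwareGraph m c) ≤ c * m + c - 1 := by
  have hone : 1 ≤ c * m + c := le_trans hc (Nat.le_add_left c (c * m))
  apply Nat.sInf_le
  refine ⟨Fin m × Fin m × Bool, parGraph hwPar, hwBag m c, ⟨?_, ?_, ?_, ?_⟩, ?_⟩
  · -- IsTree
    exact ⟨parGraph_connected' hwPar hwH (hwRoot m hm) (hwPar_dec hm),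
      parGraph_isAcyclic hwPar hwH (hwRoot m hm) (hwPar_root hm) (hwPar_dec hm)⟩
  · -- vertex coverage
    rintro ⟨A, B0, d⟩
    refine ⟨(A, B0, true), ?_⟩
    rw [hwBag_mem]
    by_cases hd : d.val < c
    · exact Or.inl ⟨hd, rfl, le_rfl⟩
    · exact Or.inr ⟨by omega, rfl, Or.inl rfl⟩
  · -- edge coverage
    rintro ⟨a1, b1, d1⟩ ⟨a2, b2, d2⟩ hadj
    rw [hardwareGraph, SimpleGraph.fromRel_adj] at hadj
    obtain ⟨hne, hrel⟩ := hadj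
    rcases hrel with (⟨h1, h2, h3, h4⟩ | ⟨h1, h2, h3, h4⟩ | ⟨h1, h2, h3, h4⟩) |
      (⟨h1, h2, h3, h4⟩ | ⟨h1, h2, h3, h4⟩ | ⟨h1, h2, h3, h4⟩)
    · -- K_{c,c} forward
      subst h1; subst h2
      exact ⟨(a1, b1, true), by rw [hwBag_mem]; exact Or.inl ⟨h3, rfl, le_rfl⟩,
        by rw [hwBag_mem]; exact Or.inr ⟨h4, rfl, Or.inl rfl⟩⟩
    · -- vertical forward
      subst h1; subst h2
      exact ⟨(a1, b1, false), by rw [hwBag_mem]; exact ⟨h3, Or.inl ⟨rfl, le_rfl⟩⟩,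
        by rw [hwBag_mem]; exact ⟨h3, Or.inr ⟨h4.symm, le_rfl⟩⟩⟩
    · -- horizontal forward
      subst h1; subst h2
      exact ⟨(a1, b2, true), by rw [hwBag_mem]; exact Or.inr ⟨h3, rfl, Or.inr h4⟩,
        by rw [hwBag_mem]; exact Or.inr ⟨h3, rfl, Or.inl rfl⟩⟩
    · -- K_{c,c} backward
      subst h1; subst h2
      exact ⟨(a2, b2, true), by rw [hwBag_mem]; exact Or.inr ⟨h4, rfl, Or.inl rfl⟩,
        by rw [hwBag_mem]; exact Or.inl ⟨h3, rfl, le_rfl⟩⟩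
    · -- vertical backward
      subst h1; subst h2
      exact ⟨(a2, b2, false), by rw [hwBag_mem]; exact ⟨h3, Or.inr ⟨h4.symm, le_rfl⟩⟩,
        by rw [hwBag_mem]; exact ⟨h3, Or.inl ⟨rfl, le_rfl⟩⟩⟩
    · -- horizontal backward
      subst h1; subst h2
      exact ⟨(a2, b1, true), by rw [hwBag_mem]; exact Or.inr ⟨h3, rfl, Or.inl rfl⟩,
        by rw [hwBag_mem]; exact Or.inr ⟨h3, rfl, Or.inr h4⟩⟩
  · -- condition 4
    rintro ⟨A, B0, d⟩
    have hAlt := A.isLt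
    have hBlt := B0.isLt
    by_cases hd : d.val < c
    · by_cases hA : A.val = 0
      · -- apex (A, 0, false)
        apply parGraph_induce_connected hwPar hwH _ (A, ⟨0, hm⟩, false)
          (by simp only [Set.mem_setOf_eq, hwBag_mem]
              exact ⟨hd, Or.inl ⟨rfl, Nat.zero_le _⟩⟩)
        rintro ⟨a, b, k⟩ hi hne
        simp only [Set.mem_setOf_eq, hwBag_mem] at hi ⊢
        have hblt := b.isLt
        cases k with
        | true =>
          rcases hi with ⟨_, ha, hb⟩ | ⟨hcd, _⟩
          · subst ha
            have hnr : ((A, b, true) : Fin m × Fin m × Bool) ≠ hwRoot m hm := by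
              intro hh
              exact absurd (congrArg (fun t => t.2.2) hh) (by simp [hwRoot])
            refine ⟨?_, hwPar_dec hm _ hnr⟩
            by_cases hb0 : b.val = 0
            · simp only [hwPar, if_pos hb0]
              exact ⟨hd, Or.inl ⟨rfl, hb⟩⟩
            · simp only [hwPar, if_neg hb0]
              exact Or.inl ⟨hd, rfl, le_trans (Nat.sub_le _ _) hb⟩
          · omega
        | false =>
          obtain ⟨_, hi2⟩ := hi
          rcases hi2 with ⟨ha, hb⟩ | ⟨ha, hb⟩
          · subst ha
            have hb0 : b.val ≠ 0 := by
              intro hb0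
              exact hne (by rw [show b = (⟨0, hm⟩ : Fin m) from Fin.ext hb0])
            have hnr : ((A, b, false) : Fin m × Fin m × Bool) ≠ hwRoot m hm := by
              intro hh
              exact hb0 (congrArg (fun t => t.2.1.val) hh)
            refine ⟨?_, hwPar_dec hm _ hnr⟩
            simp only [hwPar, if_neg hb0]
            exact ⟨hd, Or.inl ⟨rfl, le_trans (Nat.sub_le _ _) hb⟩⟩
          · omega
      · -- apex (A-1, B0, false)
        apply parGraph_induce_connected hwPar hwH _
          (⟨A.val - 1, by omega⟩, B0, false)
          (by simp only [Set.mem_setOf_eq, hwBag_mem]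
              exact ⟨hd, Or.inr ⟨by simp; omega, le_rfl⟩⟩)
        rintro ⟨a, b, k⟩ hi hne
        simp only [Set.mem_setOf_eq, hwBag_mem] at hi ⊢
        have hblt := b.isLt
        cases k with
        | true =>
          rcases hi with ⟨_, ha, hb⟩ | ⟨hcd, _⟩
          · subst ha
            have hnr : ((A, b, true) : Fin m × Fin m × Bool) ≠ hwRoot m hm := by
              intro hh
              exact absurd (congrArg (fun t => t.2.2) hh) (by simp [hwRoot])
            refine ⟨?_, hwPar_dec hm _ hnr⟩
            by_cases hb0 : b.val = 0
            · simp only [hwPar, if_pos hb0]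
              exact ⟨hd, Or.inl ⟨rfl, hb⟩⟩
            · simp only [hwPar, if_neg hb0]
              exact Or.inl ⟨hd, rfl, le_trans (Nat.sub_le _ _) hb⟩
          · omega
        | false =>
          obtain ⟨_, hi2⟩ := hi
          rcases hi2 with ⟨ha, hb⟩ | ⟨ha, hb⟩
          · subst ha
            have hnr : ((A, b, false) : Fin m × Fin m × Bool) ≠ hwRoot m hm := by
              intro hh
              exact hA (congrArg (fun t => t.1.val) hh)
            refine ⟨?_, hwPar_dec hm _ hnr⟩
            by_cases hb0 : b.val = 0
            · simp only [hwPar, if_pos hb0, if_neg hA]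
              exact ⟨hd, Or.inr ⟨by simp; omega, by simp; omega⟩⟩
            · simp only [hwPar, if_neg hb0]
              exact ⟨hd, Or.inl ⟨rfl, le_trans (Nat.sub_le _ _) hb⟩⟩
          · -- ha : A.val = a.val + 1, hb : B0 ≤ b
            have hbB : b.val ≠ B0.val := by
              intro hh
              apply hne
              rw [show a = (⟨A.val - 1, by omega⟩ : Fin m) from Fin.ext (by show a.val = A.val - 1; omega),
                 show b = B0 from Fin.ext hh]
            have hb0 : b.val ≠ 0 := by omega
            have hnr : ((a, b, false) : Fin m × Fin m × Bool) ≠ hwRoot m hm := by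
              intro hh
              exact hb0 (congrArg (fun t => t.2.1.val) hh)
            refine ⟨?_, hwPar_dec hm _ hnr⟩
            simp only [hwPar, if_neg hb0]
            exact ⟨hd, Or.inr ⟨ha, show B0.val ≤ b.val - 1 by omega⟩⟩
    · -- right vertex, apex (A, B0, true)
      apply parGraph_induce_connected hwPar hwH _ (A, B0, true)
        (by simp only [Set.mem_setOf_eq, hwBag_mem]
            exact Or.inr ⟨by omega, rfl, Or.inl rfl⟩)
      rintro ⟨a, b, k⟩ hi hne
      simp only [Set.mem_setOf_eq, hwBag_mem] at hi ⊢
      cases k with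
      | false => exact absurd hi.1 hd
      | true =>
        rcases hi with ⟨hdc, _⟩ | ⟨hcd, ha, hb⟩
        · omega
        · subst ha
          have hbB : B0.val ≠ b.val := by
            intro hh
            exact hne (by rw [show b = B0 from Fin.ext hh.symm])
          have hb0 : b.val ≠ 0 := by omega
          have hnr : ((A, b, true) : Fin m × Fin m × Bool) ≠ hwRoot m hm := by
            intro hh
            exact absurd (congrArg (fun t => t.2.2) hh) (by simp [hwRoot])
          refine ⟨?_, hwPar_dec hm _ hnr⟩
          simp only [hwPar, if_neg hb0]
          exact Or.inr ⟨by omega, rfl, Or.inl (by simp; omega)⟩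
  · -- card bound
    intro i
    have := hwBag_card hm hc i
    omega
end

section
/- For every m ≥ 1 and c ≥ 1, any graph P with treewidth τ(P) ≥ cm + c is not a minor of the hardware graph F(m,c). -/
open SimpleGraph

namespace TW


variable {I : Type} (p : I → I)

def ptree : SimpleGraph I := SimpleGraph.fromRel (fun x y => p x = y)

variable {p}

lemma ptree_adj {x y : I} : (ptree p).Adj x y ↔ x ≠ y ∧ (p x = y ∨ p y = x) := by
  simp [ptree, SimpleGraph.fromRel_adj]

section

variable {r : I → ℕ} {root : I}
variable (hroot : p root = root) (hdec : ∀ x, x ≠ root → r (p x) < r x)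

include hdec in
lemma ptree_adj_parent {x : I} (hx : x ≠ root) : (ptree p).Adj x (p x) := by
  have := hdec x hx
  exact ptree_adj.2 ⟨fun h => absurd this (by rw [← h]; exact lt_irrefl _), Or.inl rfl⟩

include hdec in
lemma ptree_reach_root (x : I) : (ptree p).Reachable x root := by
  have H : ∀ n (x : I), r x ≤ n → (ptree p).Reachable x root := by
    intro n
    induction n with
    | zero =>
      intro x hx
      by_cases h : x = root
      · exact h ▸ Reachable.refl _
      · exact absurd (hdec x h) (by omega)
    | succ n ih =>
      intro x hx
      by_cases h : x = root
      · exact h ▸ Reachable.refl _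
      · exact ((ptree_adj_parent hdec h).reachable).trans
          (ih (p x) (by have := hdec x h; omega))
  exact H (r x) x le_rfl

include hdec in
lemma ptree_connected : (ptree p).Connected := by
  have : Nonempty I := ⟨root⟩
  refine ⟨fun x y => ?_⟩
  exact (ptree_reach_root hdec x).trans (ptree_reach_root hdec y).symm

include hroot hdec in
lemma ptree_isAcyclic : (ptree p).IsAcyclic := by
  rw [isAcyclic_iff_forall_adj_isBridge]
  -- key lemma: for v with v ≠ root, every walk from v to p v uses edge s(v, p v)
  have key : ∀ v : I, v ≠ root → ∀ (q : (ptree p).Walk v (p v)), s(v, p v) ∈ q.edges := by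
    intro v hv
    -- descendant predicate
    set desc : I → Prop := fun z => Relation.ReflTransGen (fun w u => w ≠ root ∧ u = p w) z v
      with hdesc
    have desc_v : desc v := Relation.ReflTransGen.refl
    have desc_rank : ∀ z, desc z → r v ≤ r z := by
      intro z hz
      induction hz using Relation.ReflTransGen.head_induction_on with
      | refl => exact le_rfl
      | head h _ ih =>
        have := hdec _ h.1
        rw [← h.2] at this
        omega
    have desc_not_pv : ¬ desc (p v) := by
      intro h
      have := desc_rank _ h
      have := hdec v hv
      omega
    have cross : ∀ (a b : I) (q : (ptree p).Walk a b), desc a → ¬ desc b →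
        s(v, p v) ∈ q.edges := by
      intro a b q
      induction q with
      | nil => intro h1 h2; exact absurd h1 h2
      | @cons a c b hadj q ih =>
        intro h1 h2
        by_cases hc : desc c
        · exact List.mem_cons_of_mem _ (ih hc h2)
        · -- edge a-c crosses
          have hadj' := ptree_adj.1 hadj
          obtain ⟨hne, hor | hor⟩ := hadj'
          · -- p a = c : a = v
            have ha : a = v := by
              rcases h1.cases_head with h | ⟨u, hu, hu2⟩
              · exact h
              · exact absurd hu2 (by rw [hu.2, hor]; exact hc)
            subst ha
            rw [Walk.edges_cons, hor]
            exact List.mem_cons_self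
          · -- p c = a
            exfalso
            by_cases hcr : c = root
            · have hpc : p c = c := by rw [hcr, hroot]
              exact hne (by rw [← hor, hpc])
            · exact hc (Relation.ReflTransGen.head ⟨hcr, hor.symm⟩ h1)
    intro q
    exact cross v (p v) q desc_v desc_not_pv
  intro x y hadj
  rw [isBridge_iff_adj_and_forall_walk_mem_edges]
  intro q
  rw [ptree_adj] at hadj
  obtain ⟨hne, h | h⟩ := hadj
  · have hx : x ≠ root := fun hh => hne (by rw [hh, ← h, hh, hroot])
    have := key x hx (h ▸ q)
    subst h
    exact this
  · have hy : y ≠ root := fun hh => hne (by rw [hh, ← h, hh, hroot])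
    have := key y hy (h ▸ q.reverse)
    subst h
    rw [Walk.edges_reverse, List.mem_reverse] at this
    rwa [Sym2.eq_swap]

include hroot hdec in
lemma ptree_isTree : (ptree p).IsTree :=
  ⟨ptree_connected hdec, ptree_isAcyclic hroot hdec⟩

include hdec in
lemma ptree_induce_connected (S : Set I) (x0 : I) (hx0 : x0 ∈ S)
    (hcl : ∀ z ∈ S, z ≠ x0 → z ≠ root ∧ p z ∈ S) :
    ((ptree p).induce S).Connected := by
  have : Nonempty S := ⟨⟨x0, hx0⟩⟩
  refine ⟨fun x y => ?_⟩
  suffices H : ∀ (z : I) (hz : z ∈ S),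
      ((ptree p).induce S).Reachable ⟨z, hz⟩ ⟨x0, hx0⟩ by
    exact (H x.1 x.2).trans (H y.1 y.2).symm
  have H : ∀ n (z : I) (hz : z ∈ S), r z ≤ n →
      ((ptree p).induce S).Reachable ⟨z, hz⟩ ⟨x0, hx0⟩ := by
    intro n
    induction n with
    | zero =>
      intro z hz hr
      by_cases h : z = x0
      · subst h; exact Reachable.refl _
      · obtain ⟨hzr, _⟩ := hcl z hz h
        exact absurd (hdec z hzr) (by omega)
    | succ n ih =>
      intro z hz hr
      by_cases h : z = x0
      · subst h; exact Reachable.refl _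
      · obtain ⟨hzr, hp⟩ := hcl z hz h
        have hadj : ((ptree p).induce S).Adj ⟨z, hz⟩ ⟨p z, hp⟩ :=
          ptree_adj_parent hdec hzr
        exact hadj.reachable.trans (ih (p z) hp (by have := hdec z hzr; omega))
  exact fun z hz => H (r z) z hz le_rfl

end

/-- Lift reachability in an induced subgraph along a subset inclusion. -/
lemma reach_induce_mono {I : Type} {T : SimpleGraph I} {S S' : Set I} (hss : S ⊆ S')
    {x y : I} (hx : x ∈ S) (hy : y ∈ S)
    (h : (T.induce S).Reachable ⟨x, hx⟩ ⟨y, hy⟩) :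
    (T.induce S').Reachable ⟨x, hss hx⟩ ⟨y, hss hy⟩ :=
  h.map (SimpleGraph.induceHomOfLE T hss).toHom


lemma minor_treewidth_le {V W : Type} [Fintype V] (H : SimpleGraph V) (G : SimpleGraph W)
    (hm : IsMinor H G) {J : Type} (T : SimpleGraph J) (B : J → Finset W)
    (hTD : IsTreeDecomp G T B) (K : ℕ) (hK : ∀ i, (B i).card ≤ K + 1) :
    treewidth H ≤ K := by
  classical
  obtain ⟨φ, hconn, hdisj, hedge⟩ := hm
  obtain ⟨htree, hcov, hecov, hsub⟩ := hTD
  set B' : J → Finset V := fun i => Finset.univ.filter (fun v => ∃ w ∈ φ v, w ∈ B i) with hB'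
  have hmem : ∀ (i : J) (v : V), v ∈ B' i ↔ ∃ w ∈ φ v, w ∈ B i := by
    intro i v; simp [hB']
  apply Nat.sInf_le
  refine ⟨J, T, B', ⟨htree, ?_, ?_, ?_⟩, ?_⟩
  · -- vertex cover
    intro v
    obtain ⟨⟨w, hw⟩⟩ := (hconn v).nonempty
    obtain ⟨i, hi⟩ := hcov w
    exact ⟨i, (hmem i v).2 ⟨w, hw, hi⟩⟩
  · -- edge cover
    intro u v huv
    obtain ⟨a, ha, b, hb, hab⟩ := hedge u v huv
    obtain ⟨i, hi1, hi2⟩ := hecov a b hab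
    exact ⟨i, (hmem i u).2 ⟨a, ha, hi1⟩, (hmem i v).2 ⟨b, hb, hi2⟩⟩
  · -- connectivity of the induced index sets
    intro v
    set S : Set J := {i : J | v ∈ B' i} with hS
    have hsub' : ∀ w : W, w ∈ φ v → {i : J | w ∈ B i} ⊆ S := by
      intro w hw i hi
      exact (hmem i v).2 ⟨w, hw, hi⟩
    have key : ∀ (x y : ↥(φ v)) (q : (G.induce (φ v)).Walk x y)
        (i j : J) (hi : x.1 ∈ B i) (hj : y.1 ∈ B j),
        (T.induce S).Reachable ⟨i, hsub' x.1 x.2 hi⟩ ⟨j, hsub' y.1 y.2 hj⟩ := by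
      intro x y q
      induction q with
      | @nil u =>
        intro i j hi hj
        exact reach_induce_mono (hsub' u.1 u.2) hi hj
          (((hsub u.1).preconnected) ⟨i, hi⟩ ⟨j, hj⟩)
      | @cons a b cc hadj q ih =>
        intro i j hi hj
        have hGadj : G.Adj a.1 b.1 := hadj
        obtain ⟨k, hk1, hk2⟩ := hecov a.1 b.1 hGadj
        have r1 := reach_induce_mono (hsub' a.1 a.2) hi hk1
          (((hsub a.1).preconnected) ⟨i, hi⟩ ⟨k, hk1⟩)
        exact r1.trans (ih k j hk2 hj)
    have hneS : Nonempty S := by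
      obtain ⟨⟨w, hw⟩⟩ := (hconn v).nonempty
      obtain ⟨i, hi⟩ := hcov w
      exact ⟨⟨i, hsub' w hw hi⟩⟩
    refine ⟨fun x y => ?_⟩
    obtain ⟨i, hi⟩ := x
    obtain ⟨j, hj⟩ := y
    obtain ⟨w, hw, hwB⟩ := (hmem i v).1 hi
    obtain ⟨w', hw', hwB'⟩ := (hmem j v).1 hj
    obtain ⟨q⟩ := ((hconn v).preconnected) ⟨w, hw⟩ ⟨w', hw'⟩
    exact key ⟨w, hw⟩ ⟨w', hw'⟩ q i j hwB hwB'
  · -- cardinality bound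
    intro i
    by_cases hW : Nonempty W
    · refine le_trans (Finset.card_le_card_of_injOn
        (fun v => if h : ∃ w ∈ φ v, w ∈ B i then h.choose else Classical.arbitrary W)
        ?_ ?_) (hK i)
      · intro v hv
        have h := (hmem i v).1 hv
        simp only [dif_pos h]
        exact h.choose_spec.2
      · intro v1 h1 v2 h2 heq
        have e1 := (hmem i v1).1 h1
        have e2 := (hmem i v2).1 h2
        simp only [dif_pos e1, dif_pos e2] at heq
        by_contra hne
        exact (Set.disjoint_left.mp (hdisj v1 v2 hne) e1.choose_spec.1)
          (heq ▸ e2.choose_spec.1)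
    · have hempty : B' i = ∅ := by
        ext v
        simp only [hB', Finset.mem_filter, Finset.mem_univ, true_and, Finset.notMem_empty,
          iff_false]
        rintro ⟨w, -, -⟩
        exact hW ⟨w⟩
      simp [hempty]

end TW

namespace TW

/-- Parent map for the decomposition tree of the hardware graph. -/
def hpar (m : ℕ) : ℕ × ℕ × Bool → ℕ × ℕ × Bool := fun i =>
  if i.2.2 then
    (if i.2.1 = 0 then (i.1, m - 1, false) else (i.1, i.2.1 - 1, true))
  else
    (if i.2.1 = 0 then
      (if i.1 = 0 then (0, 0, false) else (i.1 - 1, m - 1, false))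
    else (i.1, i.2.1 - 1, false))

def hrank (m : ℕ) : ℕ × ℕ × Bool → ℕ := fun i =>
  if i.2.2 then i.1 * m + m + i.2.1 else i.1 * m + i.2.1

def hbag (m c : ℕ) : ℕ × ℕ × Bool → Finset (Fin m × Fin m × Fin (2 * c)) := fun i =>
  if i.2.2 then
    Finset.univ.filter (fun x => x.1.val = i.1 ∧
      ((x.2.2.val < c ∧ i.2.1 ≤ x.2.1.val) ∨
       (c ≤ x.2.2.val ∧ (x.2.1.val = i.2.1 ∨ x.2.1.val + 1 = i.2.1))))
  else
    Finset.univ.filter (fun x => x.2.2.val < c ∧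
      ((x.1.val = i.1 ∧ x.2.1.val ≤ i.2.1) ∨ (x.1.val + 1 = i.1 ∧ i.2.1 ≤ x.2.1.val)))

lemma mem_hbag_false {m c : ℕ} {A B : ℕ} {x : Fin m × Fin m × Fin (2 * c)} :
    x ∈ hbag m c (A, B, false) ↔ x.2.2.val < c ∧
      ((x.1.val = A ∧ x.2.1.val ≤ B) ∨ (x.1.val + 1 = A ∧ B ≤ x.2.1.val)) := by
  simp [hbag]

lemma mem_hbag_true {m c : ℕ} {A B : ℕ} {x : Fin m × Fin m × Fin (2 * c)} :
    x ∈ hbag m c (A, B, true) ↔ x.1.val = A ∧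
      ((x.2.2.val < c ∧ B ≤ x.2.1.val) ∨
       (c ≤ x.2.2.val ∧ (x.2.1.val = B ∨ x.2.1.val + 1 = B))) := by
  simp [hbag]

lemma hpar_root (m : ℕ) : hpar m (0, 0, false) = (0, 0, false) := by
  simp [hpar]

lemma hpar_dec (m : ℕ) (hm : 1 ≤ m) :
    ∀ i, i ≠ ((0, 0, false) : ℕ × ℕ × Bool) → hrank m (hpar m i) < hrank m i := by
  rintro ⟨a, b, s⟩ hne
  cases s with
  | true =>
    by_cases hb : b = 0
    · subst hb
      simp [hpar, hrank]
      omega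
    · simp [hpar, hrank, hb]
      omega
  | false =>
    by_cases hb : b = 0
    · subst hb
      by_cases ha : a = 0
      · exact absurd (by rw [ha]) hne
      · obtain ⟨a', rfl⟩ : ∃ a', a = a' + 1 := ⟨a - 1, by omega⟩
        have h1 : (a' + 1) * m = a' * m + m := by ring
        simp [hpar, hrank, ha]
        omega
    · simp [hpar, hrank, hb]
      omega

lemma hbag_card_false (m c : ℕ) (A B : ℕ) :
    (hbag m c (A, B, false)).card ≤ c * m + c := by
  classical
  have h := Finset.card_le_card_of_injOn
    (s := hbag m c (A, B, false))
    (f := fun x : Fin m × Fin m × Fin (2*c) =>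
      ((if x.1.val = A then x.2.1.val + (m - B) else x.2.1.val - B, x.2.2.val) : ℕ × ℕ))
    (t := (Finset.range (m+1)) ×ˢ (Finset.range c)) ?_ ?_
  · refine le_trans h ?_
    rw [Finset.card_product, Finset.card_range, Finset.card_range]
    nlinarith []
  · rintro ⟨x1, x2, x3⟩ hx
    rw [Finset.mem_coe, mem_hbag_false] at hx
    have i2 := x2.isLt
    simp only [Finset.mem_coe, Finset.mem_product, Finset.mem_range]
    dsimp only at hx ⊢
    constructor
    · split_ifs <;> omega
    · omega
  · rintro ⟨x1, x2, x3⟩ hx ⟨y1, y2, y3⟩ hy heq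
    rw [Finset.mem_coe, mem_hbag_false] at hx hy
    dsimp only at hx hy heq
    rw [Prod.mk.injEq] at heq
    obtain ⟨e1, e2⟩ := heq
    have i1 := x1.isLt; have i2 := x2.isLt
    have j1 := y1.isLt; have j2 := y2.isLt
    refine Prod.ext (Fin.ext ?_) (Prod.ext (Fin.ext ?_) (Fin.ext ?_)) <;>
      (dsimp only; split_ifs at e1 <;> omega)

lemma hbag_card_true (m c : ℕ) (A B : ℕ) :
    (hbag m c (A, B, true)).card ≤ c * m + c := by
  classical
  have h := Finset.card_le_card_of_injOn
    (s := hbag m c (A, B, true))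
    (f := fun x : Fin m × Fin m × Fin (2*c) =>
      ((if x.2.2.val < c then x.2.1.val - B else (if x.2.1.val = B then m else m - 1),
        if x.2.2.val < c then x.2.2.val else x.2.2.val - c) : ℕ × ℕ))
    (t := (Finset.range (m+1)) ×ˢ (Finset.range c)) ?_ ?_
  · refine le_trans h ?_
    rw [Finset.card_product, Finset.card_range, Finset.card_range]
    nlinarith []
  · rintro ⟨x1, x2, x3⟩ hx
    rw [Finset.mem_coe, mem_hbag_true] at hx
    have i2 := x2.isLt; have i3 := x3.isLt
    simp only [Finset.mem_coe, Finset.mem_product, Finset.mem_range]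
    dsimp only at hx ⊢
    constructor
    · split_ifs <;> omega
    · split_ifs <;> omega
  · rintro ⟨x1, x2, x3⟩ hx ⟨y1, y2, y3⟩ hy heq
    rw [Finset.mem_coe, mem_hbag_true] at hx hy
    dsimp only at hx hy heq
    rw [Prod.mk.injEq] at heq
    obtain ⟨e1, e2⟩ := heq
    have i1 := x1.isLt; have i2 := x2.isLt; have i3 := x3.isLt
    have j1 := y1.isLt; have j2 := y2.isLt; have j3 := y3.isLt
    refine Prod.ext (Fin.ext ?_) (Prod.ext (Fin.ext ?_) (Fin.ext ?_)) <;>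
      (dsimp only; split_ifs at e1 e2 <;> omega)

lemma hardware_decomp (m c : ℕ) (hm : 1 ≤ m) (hc : 1 ≤ c) :
    IsTreeDecomp (hardwareGraph m c) (ptree (hpar m)) (hbag m c) := by
  refine ⟨ptree_isTree (hpar_root m) (hpar_dec m hm), ?_, ?_, ?_⟩
  · -- vertex cover
    rintro ⟨a, b, d⟩
    by_cases hd : d.val < c
    · exact ⟨(a.val, b.val, false), by rw [mem_hbag_false]; dsimp only; omega⟩
    · exact ⟨(a.val, b.val, true), by rw [mem_hbag_true]; dsimp only; omega⟩
  · -- edge cover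
    rintro ⟨a, b, d⟩ ⟨a', b', d'⟩ hadj
    rw [hardwareGraph, SimpleGraph.fromRel_adj] at hadj
    obtain ⟨hne, hrel⟩ := hadj
    have key : ∀ (u v : Fin m × Fin m × Fin (2*c)),
        ((u.1 = v.1 ∧ u.2.1 = v.2.1 ∧ u.2.2.val < c ∧ c ≤ v.2.2.val) ∨
         (u.2.1 = v.2.1 ∧ u.2.2 = v.2.2 ∧ u.2.2.val < c ∧ u.1.val + 1 = v.1.val) ∨
         (u.1 = v.1 ∧ u.2.2 = v.2.2 ∧ c ≤ u.2.2.val ∧ u.2.1.val + 1 = v.2.1.val)) →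
        ∃ i, u ∈ hbag m c i ∧ v ∈ hbag m c i := by
      rintro ⟨u1, u2, u3⟩ ⟨v1, v2, v3⟩ (⟨h1, h2, h3, h4⟩ | ⟨h1, h2, h3, h4⟩ | ⟨h1, h2, h3, h4⟩)
      · -- cell edge
        refine ⟨(u1.val, u2.val, true), ?_, ?_⟩ <;>
          · rw [mem_hbag_true]
            dsimp only at *
            rw [Fin.ext_iff] at h1 h2
            omega
      · -- vertical edge
        refine ⟨(v1.val, u2.val, false), ?_, ?_⟩ <;>
          · rw [mem_hbag_false]
            dsimp only at *
            rw [Fin.ext_iff] at h1 h2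
            omega
      · -- horizontal edge
        refine ⟨(u1.val, v2.val, true), ?_, ?_⟩ <;>
          · rw [mem_hbag_true]
            dsimp only at *
            rw [Fin.ext_iff] at h1 h2
            omega
    rcases hrel with h | h
    · exact key _ _ h
    · obtain ⟨i, h1, h2⟩ := key _ _ h
      exact ⟨i, h2, h1⟩
  · -- connectivity of vertex index sets
    rintro ⟨a, b, d⟩
    by_cases hd : d.val < c
    · -- left vertex
      apply ptree_induce_connected (r := hrank m) (root := (0,0,false)) (hpar_dec m hm)
        _ (a.val, b.val, false)
      · rw [Set.mem_setOf_eq, mem_hbag_false]; dsimp only; omega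
      · rintro ⟨za, zb, zs⟩ hz hzne
        cases zs with
        | true =>
          rw [Set.mem_setOf_eq, mem_hbag_true] at hz
          dsimp only at hz
          obtain ⟨hza, hz2⟩ := hz
          have hz3 : zb ≤ b.val := by omega
          constructor
          · simp
          · by_cases hzb : zb = 0
            · subst hzb
              have : hpar m (za, 0, true) = (za, m - 1, false) := by simp [hpar]
              rw [this, Set.mem_setOf_eq, mem_hbag_false]
              dsimp only
              have := b.isLt
              omega
            · have : hpar m (za, zb, true) = (za, zb - 1, true) := by simp [hpar, hzb]
              rw [this, Set.mem_setOf_eq, mem_hbag_true]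
              dsimp only
              omega
        | false =>
          rw [Set.mem_setOf_eq, mem_hbag_false] at hz
          dsimp only at hz
          obtain ⟨-, hz2⟩ := hz
          rcases hz2 with ⟨hza, hzb⟩ | ⟨hza, hzb⟩
          · -- za = a : b ≤ zb, and z ≠ x0 forces zb > b
            have hzb' : b.val < zb := by
              rcases Nat.lt_or_ge b.val zb with h | h
              · exact h
              · exfalso; apply hzne
                have : zb = b.val := by omega
                rw [this, ← hza]
            constructor
            · intro hcon
              rw [Prod.mk.injEq, Prod.mk.injEq] at hcon
              omega
            · have hzb0 : zb ≠ 0 := by omega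
              have : hpar m (za, zb, false) = (za, zb - 1, false) := by simp [hpar, hzb0]
              rw [this, Set.mem_setOf_eq, mem_hbag_false]
              dsimp only
              omega
          · -- za = a + 1
            constructor
            · intro hcon
              rw [Prod.mk.injEq, Prod.mk.injEq] at hcon
              omega
            · by_cases hzb0 : zb = 0
              · subst hzb0
                have hza0 : za ≠ 0 := by omega
                have : hpar m (za, 0, false) = (za - 1, m - 1, false) := by
                  simp [hpar, hza0]
                rw [this, Set.mem_setOf_eq, mem_hbag_false]
                dsimp only
                have := b.isLt
                omega
              · have : hpar m (za, zb, false) = (za, zb - 1, false) := by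
                  simp [hpar, hzb0]
                rw [this, Set.mem_setOf_eq, mem_hbag_false]
                dsimp only
                omega
    · -- right vertex
      apply ptree_induce_connected (r := hrank m) (root := (0,0,false)) (hpar_dec m hm)
        _ (a.val, b.val, true)
      · rw [Set.mem_setOf_eq, mem_hbag_true]; dsimp only; omega
      · rintro ⟨za, zb, zs⟩ hz hzne
        cases zs with
        | false =>
          rw [Set.mem_setOf_eq, mem_hbag_false] at hz
          dsimp only at hz
          omega
        | true =>
          rw [Set.mem_setOf_eq, mem_hbag_true] at hz
          dsimp only at hz
          obtain ⟨hza, hz2⟩ := hz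
          have hzb : zb = b.val ∨ zb = b.val + 1 := by omega
          have hzb' : zb = b.val + 1 := by
            rcases hzb with h | h
            · exfalso; apply hzne; rw [h, ← hza]
            · exact h
          constructor
          · simp
          · have hzb0 : zb ≠ 0 := by omega
            have : hpar m (za, zb, true) = (za, zb - 1, true) := by simp [hpar, hzb0]
            rw [this, Set.mem_setOf_eq, mem_hbag_true]
            dsimp only
            omega

end TW

/-- For every `m ≥ 1` and `c ≥ 1`, any graph `P` with treewidth at least
`c * m + c` is not a minor of the hardware graph `F(m, c)`. -/
theorem not_isMinor_of_treewidth_ge (m c : ℕ) (hm : 1 ≤ m) (hc : 1 ≤ c)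
    {V : Type} [Fintype V] (P : SimpleGraph V)
    (hP : c * m + c ≤ treewidth P) :
    ¬ IsMinor P (hardwareGraph m c) := by
  intro hmin
  have htd := TW.hardware_decomp m c hm hc
  have h1 : 1 ≤ c * m + c := le_trans hc (Nat.le_add_left c (c * m))
  have hcard : ∀ i, (TW.hbag m c i).card ≤ (c * m + c - 1) + 1 := by
    rintro ⟨A, B, st⟩
    rw [Nat.sub_add_cancel h1]
    cases st
    · exact TW.hbag_card_false m c A B
    · exact TW.hbag_card_true m c A B
  have hle := TW.minor_treewidth_le P (hardwareGraph m c) hmin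
    (TW.ptree (TW.hpar m)) (TW.hbag m c) htd (c * m + c - 1) hcard
  set K := c * m with hK
  omega
end

section
/- For every m ≥ 1 and c ≥ 1, the complete graph K_{cm+c+1} is not a minor of the hardware graph F(m,c); consequently, no graph containing K_{cm+c+1} as a subgraph or as a minor is a minor of F(m,c). -/
open SimpleGraph

/-- `H` embeds as a subgraph of `G`: an injective map preserving adjacency. -/
def IsSubgraphEmb {V W : Type} (H : SimpleGraph V) (G : SimpleGraph W) : Prop :=
  ∃ f : V → W, Function.Injective f ∧ ∀ u v : V, H.Adj u v → G.Adj (f u) (f v)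


namespace NotMinorAux



/-- Comb tree adjacency on `ℕ × ℕ`: spine `(s,0)—(s+1,0)`, columns `(s,k)—(s,k+1)`. -/
def CombAdj : ℕ × ℕ → ℕ × ℕ → Prop := fun x y =>
  (x.2 = 0 ∧ y.2 = 0 ∧ (x.1 + 1 = y.1 ∨ y.1 + 1 = x.1)) ∨
  (x.1 = y.1 ∧ (x.2 + 1 = y.2 ∨ y.2 + 1 = x.2))

lemma CombAdj.symm {x y : ℕ × ℕ} (h : CombAdj x y) : CombAdj y x := by
  unfold CombAdj at h ⊢; tauto

/-- Reachability within a subset of the comb. -/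
inductive ReachIn (S : Set (ℕ × ℕ)) (x : ℕ × ℕ) : ℕ × ℕ → Prop
  | refl (hx : x ∈ S) : ReachIn S x x
  | tail {y z : ℕ × ℕ} : ReachIn S x y → CombAdj y z → z ∈ S → ReachIn S x z

lemma ReachIn.mem_right {S : Set (ℕ × ℕ)} {x y : ℕ × ℕ} (h : ReachIn S x y) : y ∈ S := by
  cases h <;> assumption

lemma ReachIn.mem_left {S : Set (ℕ × ℕ)} {x y : ℕ × ℕ} (h : ReachIn S x y) : x ∈ S := by
  induction h with
  | refl hx => exact hx
  | tail _ _ _ ih => exact ih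

lemma ReachIn.trans {S : Set (ℕ × ℕ)} {x y z : ℕ × ℕ} (h1 : ReachIn S x y)
    (h2 : ReachIn S y z) : ReachIn S x z := by
  induction h2 with
  | refl _ => exact h1
  | tail _ hadj hz ih => exact ih.tail hadj hz

lemma ReachIn.symm {S : Set (ℕ × ℕ)} {x y : ℕ × ℕ} (h : ReachIn S x y) : ReachIn S y x := by
  induction h with
  | refl hx => exact .refl hx
  | tail h1 hadj hz ih => exact ((ReachIn.refl hz).tail hadj.symm h1.mem_right).trans ih

lemma ReachIn.mono {S T : Set (ℕ × ℕ)} (hST : S ⊆ T) {x y : ℕ × ℕ} (h : ReachIn S x y) :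
    ReachIn T x y := by
  induction h with
  | refl hx => exact .refl (hST hx)
  | tail _ hadj hz ih => exact ih.tail hadj (hST hz)

lemma reach_right {S : Set (ℕ × ℕ)} {s t : ℕ} (hst : s ≤ t)
    (hall : ∀ r, s ≤ r → r ≤ t → ((r, 0) : ℕ × ℕ) ∈ S) :
    ReachIn S (s, 0) (t, 0) := by
  induction t, hst using Nat.le_induction with
  | base => exact .refl (hall s le_rfl le_rfl)
  | succ t ht ih =>
      exact (ih (fun r h1 h2 => hall r h1 (by omega))).tail
        (Or.inl ⟨rfl, rfl, Or.inl rfl⟩) (hall (t + 1) (by omega) le_rfl)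

lemma reach_up {S : Set (ℕ × ℕ)} {j k1 k2 : ℕ} (hk : k1 ≤ k2)
    (hall : ∀ k, k1 ≤ k → k ≤ k2 → ((j, k) : ℕ × ℕ) ∈ S) :
    ReachIn S (j, k1) (j, k2) := by
  induction k2, hk using Nat.le_induction with
  | base => exact .refl (hall k1 le_rfl le_rfl)
  | succ t ht ih =>
      exact (ih (fun k h1 h2 => hall k h1 (by omega))).tail
        (Or.inr ⟨rfl, Or.inl rfl⟩) (hall (t + 1) (by omega) le_rfl)

/-- Crossing the spine cut between position `t` and `t+1` forces `(t,0)` to be in `S`. -/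
lemma cross {S : Set (ℕ × ℕ)} {x y : ℕ × ℕ} (h : ReachIn S x y) {t : ℕ} :
    x.1 ≤ t → t < y.1 → ((t, 0) : ℕ × ℕ) ∈ S := by
  induction h with
  | refl hx' => intro h1 h2; omega
  | tail h1 hadj hz ih =>
      rename_i y' z'
      intro hx hy
      by_cases hy' : t < y'.1
      · exact ih hx hy'
      · rcases hadj with ⟨h2, h3, h4 | h4⟩ | ⟨h2, _⟩
        · have hey : y' = ((t, 0) : ℕ × ℕ) := Prod.ext (by omega) h2
          exact hey ▸ h1.mem_right
        · omega
        · omega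

/-- Leaving the part of column `s` strictly above level `j` forces `(s,j)` to be in `S`. -/
lemma cut {S : Set (ℕ × ℕ)} {x y : ℕ × ℕ} (h : ReachIn S x y) {s j : ℕ}
    (hx1 : x.1 = s) (hx2 : j < x.2) : ¬ (y.1 = s ∧ j < y.2) → ((s, j) : ℕ × ℕ) ∈ S := by
  induction h with
  | refl hx' => intro hy; exact absurd ⟨hx1, hx2⟩ hy
  | tail h1 hadj hz ih =>
      rename_i y' z'
      intro hy
      by_cases hy' : y'.1 = s ∧ j < y'.2
      · rcases hadj with ⟨h2, _, _⟩ | ⟨h2, h4 | h4⟩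
        · omega
        · exact absurd ⟨by omega, by omega⟩ hy
        · have hez : z' = ((s, j) : ℕ × ℕ) := Prod.ext (by omega) (by omega)
          exact hez ▸ hz
      · exact ih hy'

/-- Reachability within a subset of a simple graph. -/
inductive GReach {W : Type} (G : SimpleGraph W) (S : Set W) (x : W) : W → Prop
  | refl (hx : x ∈ S) : GReach G S x x
  | tail {y z : W} : GReach G S x y → G.Adj y z → z ∈ S → GReach G S x z

lemma GReach.mem_right {W : Type} {G : SimpleGraph W} {S : Set W} {x y : W}
    (h : GReach G S x y) : y ∈ S := by cases h <;> assumption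

lemma GReach.mem_left {W : Type} {G : SimpleGraph W} {S : Set W} {x y : W}
    (h : GReach G S x y) : x ∈ S := by
  induction h with
  | refl hx => exact hx
  | tail _ _ _ ih => exact ih

lemma GReach.trans {W : Type} {G : SimpleGraph W} {S : Set W} {x y z : W}
    (h1 : GReach G S x y) (h2 : GReach G S y z) : GReach G S x z := by
  induction h2 with
  | refl _ => exact h1
  | tail _ hadj hz ih => exact ih.tail hadj hz

lemma GReach.mono {W : Type} {G : SimpleGraph W} {S T : Set W} (hST : S ⊆ T) {x y : W}
    (h : GReach G S x y) : GReach G T x y := by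
  induction h with
  | refl hx => exact .refl (hST hx)
  | tail _ hadj hz ih => exact ih.tail hadj (hST hz)

lemma greach_of_walk {W : Type} {G : SimpleGraph W} {S : Set W} :
    ∀ {u v : S}, (G.induce S).Walk u v → GReach G S u.1 v.1 := by
  intro u v w
  induction w with
  | @nil a => exact .refl a.2
  | @cons a b _ h p ih =>
      have hadj : G.Adj a.1 b.1 := h
      exact ((GReach.refl a.2).tail hadj b.2).trans ih

lemma greach_of_connected {W : Type} {G : SimpleGraph W} {S : Set W}
    (h : (G.induce S).Connected) {x y : W} (hx : x ∈ S) (hy : y ∈ S) :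
    GReach G S x y := by
  obtain ⟨w⟩ := h.preconnected ⟨x, hx⟩ ⟨y, hy⟩
  exact greach_of_walk w

/-- The set of comb nodes whose bag contains the hardware vertex `w`. -/
def Mset (m c : ℕ) (w : Fin m × Fin m × Fin (2 * c)) : Set (ℕ × ℕ) :=
  {x | (w.2.2.val < c ∧
          ((x.2 = 0 ∧ w.1.val * (m + 1) ≤ x.1 + w.2.1.val + 1 ∧
              x.1 + w.2.1.val ≤ w.1.val * (m + 1) + m) ∨
           (x.1 = w.1.val * (m + 1) ∧ 1 ≤ x.2 ∧ x.2 ≤ w.2.1.val + 1))) ∨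
       (c ≤ w.2.2.val ∧ x.1 = w.1.val * (m + 1) ∧ w.2.1.val + 1 ≤ x.2 ∧
          x.2 ≤ w.2.1.val + 2 ∧ x.2 ≤ m)}

lemma junction_mem {m c : ℕ} {w : Fin m × Fin m × Fin (2 * c)} (hd : w.2.2.val < c) :
    ((w.1.val * (m + 1), 0) : ℕ × ℕ) ∈ Mset m c w := by
  have hb := w.2.1.isLt
  exact Or.inl ⟨hd, Or.inl ⟨rfl, by omega, by omega⟩⟩

lemma Mset_nonempty {m c : ℕ} (w : Fin m × Fin m × Fin (2 * c)) : (Mset m c w).Nonempty := by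
  by_cases hd : w.2.2.val < c
  · exact ⟨_, junction_mem hd⟩
  · have hb := w.2.1.isLt
    exact ⟨(w.1.val * (m + 1), w.2.1.val + 1), Or.inr ⟨by omega, rfl, le_rfl, by omega, by omega⟩⟩

lemma reach_to_junction {m c : ℕ} {w : Fin m × Fin m × Fin (2 * c)} {x : ℕ × ℕ}
    (hx : x ∈ Mset m c w) (hd : w.2.2.val < c) :
    ReachIn (Mset m c w) x (w.1.val * (m + 1), 0) := by
  have hb := w.2.1.isLt
  obtain ⟨s, k⟩ := x
  rcases hx with ⟨-, ⟨hk0, h1, h2⟩ | ⟨hs, h1, h2⟩⟩ | ⟨hcd, -⟩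
  · -- spine point
    simp only at hk0; subst hk0
    rcases le_total s (w.1.val * (m + 1)) with hle | hle
    · exact reach_right hle (fun r hr1 hr2 => Or.inl ⟨hd, Or.inl ⟨rfl, by omega, by omega⟩⟩)
    · exact (reach_right hle (fun r hr1 hr2 =>
        Or.inl ⟨hd, Or.inl ⟨rfl, by omega, by omega⟩⟩)).symm
  · -- column point
    simp only at hs; subst hs
    exact (reach_up (Nat.zero_le k) (fun k' hk1 hk2 => by
      rcases Nat.eq_zero_or_pos k' with h | h
      · subst h; exact junction_mem hd
      · exact Or.inl ⟨hd, Or.inr ⟨rfl, h, by omega⟩⟩)).symm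
  · omega

lemma Mset_conn {m c : ℕ} (w : Fin m × Fin m × Fin (2 * c)) {x y : ℕ × ℕ}
    (hx : x ∈ Mset m c w) (hy : y ∈ Mset m c w) : ReachIn (Mset m c w) x y := by
  by_cases hd : w.2.2.val < c
  · exact (reach_to_junction hx hd).trans (reach_to_junction hy hd).symm
  · -- right vertex: a short column segment
    obtain ⟨s, k⟩ := x
    obtain ⟨t, l⟩ := y
    rcases hx with ⟨hdc, -⟩ | ⟨-, hs, hk1, hk2, hk3⟩
    · omega
    rcases hy with ⟨hdc, -⟩ | ⟨-, ht, hl1, hl2, hl3⟩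
    · omega
    simp only at hs ht; subst hs; subst ht
    rcases le_total k l with hle | hle
    · exact reach_up hle (fun k' h1 h2 => Or.inr ⟨by omega, rfl, by omega, by omega, by omega⟩)
    · exact (reach_up hle (fun k' h1 h2 =>
        Or.inr ⟨by omega, rfl, by omega, by omega, by omega⟩)).symm

lemma cover_rel {m c : ℕ} {u w : Fin m × Fin m × Fin (2 * c)}
    (h : (u.1 = w.1 ∧ u.2.1 = w.2.1 ∧ u.2.2.val < c ∧ c ≤ w.2.2.val) ∨
         (u.2.1 = w.2.1 ∧ u.2.2 = w.2.2 ∧ u.2.2.val < c ∧ u.1.val + 1 = w.1.val) ∨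
         (u.1 = w.1 ∧ u.2.2 = w.2.2 ∧ c ≤ u.2.2.val ∧ u.2.1.val + 1 = w.2.1.val)) :
    ∃ x, x ∈ Mset m c u ∧ x ∈ Mset m c w := by
  obtain ⟨a, b, d⟩ := u
  obtain ⟨a', b', d'⟩ := w
  simp only at h
  have hb := b.isLt
  have hb' := b'.isLt
  rcases h with ⟨h1, h2, h3, h4⟩ | ⟨h1, h2, h3, h4⟩ | ⟨h1, h2, h3, h4⟩
  · -- cell edge: meet at branch node (A, b+1)
    subst h1; subst h2
    exact ⟨(a.val * (m + 1), b.val + 1),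
      by simp only [Mset, Set.mem_setOf_eq, true_and, and_true]; omega,
      by simp only [Mset, Set.mem_setOf_eq, true_and, and_true]; omega⟩
  · -- vertical edge: meet at spine node (A + (m - b), 0)
    subst h1; subst h2
    have key : a'.val * (m + 1) = a.val * (m + 1) + (m + 1) := by rw [← h4]; ring
    exact ⟨(a.val * (m + 1) + (m - b.val), 0),
      by simp only [Mset, Set.mem_setOf_eq, true_and, and_true]; omega,
      by simp only [Mset, Set.mem_setOf_eq, true_and, and_true]; omega⟩
  · -- horizontal edge: meet at branch node (A, b+2)
    subst h1; subst h2
    exact ⟨(a.val * (m + 1), b.val + 2),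
      by simp only [Mset, Set.mem_setOf_eq, true_and, and_true]; omega,
      by simp only [Mset, Set.mem_setOf_eq, true_and, and_true]; omega⟩

lemma cover {m c : ℕ} {u w : Fin m × Fin m × Fin (2 * c)}
    (h : (hardwareGraph m c).Adj u w) : ∃ x, x ∈ Mset m c u ∧ x ∈ Mset m c w := by
  rw [hardwareGraph, SimpleGraph.fromRel_adj] at h
  rcases h.2 with h' | h'
  · exact cover_rel h'
  · obtain ⟨x, h1, h2⟩ := cover_rel h'
    exact ⟨x, h2, h1⟩


lemma mul_gap {a1 a2 M : ℕ} (h : a1 < a2) : a1 * M + M ≤ a2 * M := by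
  have h' := Nat.mul_le_mul_right M (Nat.succ_le_of_lt h)
  rwa [Nat.succ_mul] at h'

set_option maxHeartbeats 1600000 in
lemma bag_card {m c : ℕ} (hm : 1 ≤ m) (x : ℕ × ℕ) (s : Finset (Fin m × Fin m × Fin (2 * c)))
    (hs : ∀ w ∈ s, x ∈ Mset m c w) : s.card ≤ c * m + c := by
  classical
  have hcard : ((Finset.range (m + 1)) ×ˢ (Finset.range c)).card = c * m + c := by
    rw [Finset.card_product, Finset.card_range, Finset.card_range]; ring
  rw [← hcard]
  apply Finset.card_le_card_of_injOn (fun w =>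
    ((if x.2 = 0 then
        w.1.val * (m + 1) + m - (w.2.1.val + x.1) - (if x.1 < w.1.val * (m + 1) then 1 else 0)
      else if w.2.2.val < c then w.2.1.val + 2 - x.2
      else if w.2.1.val + 1 = x.2 then 0 else m),
     (if w.2.2.val < c then w.2.2.val else w.2.2.val - c)))
  · -- maps into range (m+1) ×ˢ range c
    intro w hw
    have hmem := hs w hw
    simp only [Mset, Set.mem_setOf_eq] at hmem
    have hb := w.2.1.isLt
    have hd := w.2.2.isLt
    simp only [Finset.mem_coe, Finset.mem_product, Finset.mem_range]
    by_cases hx2 : x.2 = 0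
    · -- spine node: only left vertices
      have hleft : w.2.2.val < c ∧ w.1.val * (m + 1) ≤ x.1 + w.2.1.val + 1 ∧
          x.1 + w.2.1.val ≤ w.1.val * (m + 1) + m := by
        rcases hmem with ⟨h1, ⟨-, h2, h3⟩ | ⟨-, h2, -⟩⟩ | ⟨-, -, h2, -, -⟩ <;>
          first | exact ⟨h1, h2, h3⟩ | omega
      obtain ⟨h1, h2, h3⟩ := hleft
      constructor
      · simp only [if_pos hx2]; split_ifs <;> omega
      · simp only [if_pos h1]; omega
    · by_cases hdc : w.2.2.val < c
      · have hcol : x.1 = w.1.val * (m + 1) ∧ 1 ≤ x.2 ∧ x.2 ≤ w.2.1.val + 1 := by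
          rcases hmem with ⟨-, ⟨h2, -, -⟩ | h⟩ | ⟨h1, -⟩ <;> first | exact h | omega
        constructor
        · simp only [if_neg hx2, if_pos hdc]; omega
        · simp only [if_pos hdc]; omega
      · have hr : w.2.1.val + 1 ≤ x.2 ∧ x.2 ≤ w.2.1.val + 2 ∧ x.2 ≤ m := by
          rcases hmem with ⟨h1, -⟩ | ⟨-, -, h2, h3, h4⟩ <;> first | exact ⟨h2, h3, h4⟩ | omega
        constructor
        · simp only [if_neg hx2, if_neg hdc]; split_ifs <;> omega
        · simp only [if_neg hdc]; omega
  · -- injectivity on the bag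
    intro w1 hw1 w2 hw2 heq
    have hm1 := hs w1 (by simpa using hw1)
    have hm2 := hs w2 (by simpa using hw2)
    obtain ⟨a1, b1, d1⟩ := w1
    obtain ⟨a2, b2, d2⟩ := w2
    simp only [Mset, Set.mem_setOf_eq] at hm1 hm2
    simp only [Prod.mk.injEq] at heq ⊢
    have hb1 := b1.isLt
    have hb2 := b2.isLt
    have hd1 := d1.isLt
    have hd2 := d2.isLt
    have hgap12 : a1.val < a2.val → a1.val * (m + 1) + (m + 1) ≤ a2.val * (m + 1) :=
      fun h => mul_gap h
    have hgap21 : a2.val < a1.val → a2.val * (m + 1) + (m + 1) ≤ a1.val * (m + 1) :=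
      fun h => mul_gap h
    have haeq : a1.val = a2.val → a1.val * (m + 1) = a2.val * (m + 1) := fun h => by rw [h]
    obtain ⟨he1, he2⟩ := heq
    refine ⟨Fin.ext ?_, Fin.ext ?_, Fin.ext ?_⟩ <;>
    · rcases lt_trichotomy a1.val a2.val with hlt | he | hgt
      · have hg := hgap12 hlt
        split_ifs at he1 he2 <;> omega
      · have hg := haeq he
        split_ifs at he1 he2 <;> omega
      · have hg := hgap21 hgt
        split_ifs at he1 he2 <;> omega

lemma core {m c : ℕ} (hm : 1 ≤ m) (hc : 1 ≤ c)
    (χ : Fin (c * m + c + 1) → Set (Fin m × Fin m × Fin (2 * c)))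
    (hne : ∀ v, (χ v).Nonempty)
    (hcon : ∀ v, ∀ p ∈ χ v, ∀ q ∈ χ v, GReach (hardwareGraph m c) (χ v) p q)
    (hdis : ∀ u v, u ≠ v → Disjoint (χ u) (χ v))
    (hedge : ∀ u v, u ≠ v → ∃ p ∈ χ u, ∃ q ∈ χ v, (hardwareGraph m c).Adj p q) : False := by
  classical
  let n := c * m + c + 1
  let U : Fin n → Set (ℕ × ℕ) := fun v => {x | ∃ w ∈ χ v, x ∈ Mset m c w}
  have hMsub : ∀ v w, w ∈ χ v → Mset m c w ⊆ U v := fun v w hw x hx => ⟨w, hw, hx⟩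
  have hUconn : ∀ v, ∀ x ∈ U v, ∀ y ∈ U v, ReachIn (U v) x y := by
    intro v x hx y hy
    obtain ⟨w1, hw1, hx1⟩ := hx
    obtain ⟨w2, hw2, hy2⟩ := hy
    have main : ∀ {q}, GReach (hardwareGraph m c) (χ v) w1 q →
        ∀ {y'}, y' ∈ Mset m c q → ReachIn (U v) x y' := by
      intro q hq
      induction hq with
      | refl h => exact fun hy' => (Mset_conn w1 hx1 hy').mono (hMsub v w1 hw1)
      | tail h1 hadj hz ih =>
          intro y' hy'
          obtain ⟨z0, hz1, hz2⟩ := cover hadj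
          exact (ih hz1).trans ((Mset_conn _ hz2 hy').mono (hMsub v _ hz))
    exact main (hcon v w1 hw1 w2 hw2) hy2
  have hUne : ∀ v, (U v).Nonempty := by
    intro v
    obtain ⟨w, hw⟩ := hne v
    obtain ⟨x, hx⟩ := Mset_nonempty w
    exact ⟨x, w, hw, hx⟩
  have hint : ∀ u v : Fin n, ∃ p, p ∈ U u ∧ p ∈ U v := by
    intro u v
    by_cases huv : u = v
    · subst huv; obtain ⟨x, hx⟩ := hUne u; exact ⟨x, hx, hx⟩
    · obtain ⟨p, hp, q, hq, hadj⟩ := hedge u v huv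
      obtain ⟨z, h1, h2⟩ := cover hadj
      exact ⟨z, ⟨p, hp, h1⟩, ⟨q, hq, h2⟩⟩
  -- Helly on the spine
  let l : Fin n → ℕ := fun v => sInf {s | ∃ k, ((s, k) : ℕ × ℕ) ∈ U v}
  have hlset : ∀ v, {s | ∃ k, ((s, k) : ℕ × ℕ) ∈ U v}.Nonempty := by
    intro v
    obtain ⟨x, hx⟩ := hUne v
    exact ⟨x.1, x.2, by simpa using hx⟩
  have hlmem : ∀ v, ∃ k, ((l v, k) : ℕ × ℕ) ∈ U v := fun v => Nat.sInf_mem (hlset v)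
  have hlle : ∀ v, ∀ x ∈ U v, l v ≤ x.1 := fun v x hx => Nat.sInf_le ⟨x.2, by simpa using hx⟩
  have hFinNe : (Finset.univ : Finset (Fin n)).Nonempty := ⟨⟨0, by omega⟩, Finset.mem_univ _⟩
  obtain ⟨i0, -, hi0⟩ := Finset.exists_max_image Finset.univ l hFinNe
  have hs : ∀ v, ∃ k, ((l i0, k) : ℕ × ℕ) ∈ U v := by
    intro v
    obtain ⟨p, hpv, hpi⟩ := hint v i0
    have h1 : l i0 ≤ p.1 := hlle i0 p hpi
    rcases eq_or_lt_of_le h1 with he | hlt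
    · exact ⟨p.2, by rw [he]; simpa using hpv⟩
    · obtain ⟨kz, hz⟩ := hlmem v
      have h2 : l v ≤ l i0 := hi0 v (Finset.mem_univ v)
      exact ⟨0, cross (hUconn v _ hz p hpv) (by simpa using h2) hlt⟩
  -- Helly on the column at `l i0`
  let K : Fin n → Set ℕ := fun v => {k | ((l i0, k) : ℕ × ℕ) ∈ U v}
  have hKne : ∀ v, (K v).Nonempty := hs
  let κ : Fin n → ℕ := fun v => sInf (K v)
  have hκ : ∀ v, ((l i0, κ v) : ℕ × ℕ) ∈ U v := fun v => Nat.sInf_mem (hKne v)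
  obtain ⟨j0, -, hj0⟩ := Finset.exists_max_image Finset.univ κ hFinNe
  have hall : ∀ v, ((l i0, κ j0) : ℕ × ℕ) ∈ U v := by
    intro v
    have hev : ∃ e, ((l i0, e) : ℕ × ℕ) ∈ U v ∧ e ∈ K j0 := by
      by_cases hvj : v = j0
      · subst hvj; exact ⟨κ v, hκ v, hκ v⟩
      · obtain ⟨q, hqv, hqj⟩ := hint v j0
        by_cases hq1 : q.1 = l i0
        · exact ⟨q.2, by rw [← hq1]; simpa using hqv, show ((l i0, q.2) : ℕ × ℕ) ∈ U j0 by
            rw [← hq1]; simpa using hqj⟩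
        · have h0 : ∀ u, q ∈ U u → ((l i0, 0) : ℕ × ℕ) ∈ U u := by
            intro u hq
            rcases Nat.eq_zero_or_pos (κ u) with h0' | hpos
            · have := hκ u; rwa [h0'] at this
            · exact cut (hUconn u _ (hκ u) q hq) rfl hpos (fun hcontra => hq1 hcontra.1)
          exact ⟨0, h0 v hqv, h0 j0 hqj⟩
    obtain ⟨e, hev', hej⟩ := hev
    have h1 : κ v ≤ κ j0 := hj0 v (Finset.mem_univ v)
    have h2 : κ j0 ≤ e := Nat.sInf_le hej
    rcases eq_or_lt_of_le h1 with heq | hlt1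
    · rw [← heq]; exact hκ v
    rcases eq_or_lt_of_le h2 with heq2 | hlt2
    · rw [heq2]; exact hev'
    · exact cut (hUconn v _ hev' _ (hκ v)) rfl hlt2 (fun hcontra => by omega)
  -- counting
  have hwv : ∀ v, ∃ w, w ∈ χ v ∧ ((l i0, κ j0) : ℕ × ℕ) ∈ Mset m c w := fun v => hall v
  choose F hF1 hF2 using hwv
  have hinj : Function.Injective F := by
    intro u v huv
    by_contra hne'
    have h2 : F u ∈ χ v := by rw [huv]; exact hF1 v
    exact Set.disjoint_left.mp (hdis u v hne') (hF1 u) h2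
  have hcard : (Finset.univ.image F).card = n := by
    rw [Finset.card_image_of_injective _ hinj, Finset.card_univ, Fintype.card_fin]
  have hle : (Finset.univ.image F).card ≤ c * m + c := by
    apply bag_card hm
    intro w hw
    obtain ⟨v, -, rfl⟩ := Finset.mem_image.mp hw
    exact hF2 v
  omega

lemma greach_union {V W : Type} {P : SimpleGraph V} {G : SimpleGraph W}
    {φ : V → Set W} (hφ : ∀ p, ∀ x ∈ φ p, ∀ y ∈ φ p, GReach G (φ p) x y)
    (hed : ∀ p q, P.Adj p q → ∃ a ∈ φ p, ∃ b ∈ φ q, G.Adj a b)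
    {A : Set V} {p q : V} (h : GReach P A p q) :
    ∀ {x y : W}, x ∈ φ p → y ∈ φ q → GReach G {w | ∃ r ∈ A, w ∈ φ r} x y := by
  induction h with
  | refl hp => exact fun hx hy => (hφ _ _ hx _ hy).mono (fun z hz => show ∃ r ∈ A, z ∈ φ r from ⟨p, hp, hz⟩)
  | tail h1 hadj hq ih =>
      rename_i q' q''
      intro x y hx hy
      obtain ⟨a, ha, b, hb, hab⟩ := hed q' q'' hadj
      exact ((ih hx ha).tail hab ⟨q'', hq, hb⟩).trans
        ((hφ q'' _ hb _ hy).mono (fun z hz => show ∃ r ∈ A, z ∈ φ r from ⟨q'', hq, hz⟩))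


end NotMinorAux

open NotMinorAux in
/-- For every `m ≥ 1` and `c ≥ 1`, the complete graph `K_{cm+c+1}` is not a
minor of the hardware graph `F(m, c)`; consequently, no graph containing
`K_{cm+c+1}` as a subgraph or as a minor is a minor of `F(m, c)`. -/
theorem not_isMinor_bigClique (m c : ℕ) (hm : 1 ≤ m) (hc : 1 ≤ c) :
    ¬ IsMinor (⊤ : SimpleGraph (Fin (c * m + c + 1))) (hardwareGraph m c) ∧
    ∀ (V : Type) (P : SimpleGraph V),
      (IsSubgraphEmb (⊤ : SimpleGraph (Fin (c * m + c + 1))) P ∨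
        IsMinor (⊤ : SimpleGraph (Fin (c * m + c + 1))) P) →
      ¬ IsMinor P (hardwareGraph m c) := by
  constructor
  · rintro ⟨φ, hconn, hdisj, hadj⟩
    refine core hm hc φ (fun v => Set.nonempty_coe_sort.mp (hconn v).nonempty) ?_ hdisj ?_
    · intro v p hp q hq
      exact greach_of_connected (hconn v) hp hq
    · intro u v huv
      exact hadj u v ((SimpleGraph.top_adj _ _).mpr huv)
  · rintro V P hP ⟨φ, hconn, hdisj, hadj⟩
    rcases hP with ⟨f, hfinj, hfadj⟩ | ⟨ψ, hψconn, hψdis, hψadj⟩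
    · refine core hm hc (fun v => φ (f v))
        (fun v => Set.nonempty_coe_sort.mp (hconn (f v)).nonempty) ?_ ?_ ?_
      · intro v p hp q hq
        exact greach_of_connected (hconn (f v)) hp hq
      · intro u v huv
        exact hdisj (f u) (f v) (fun hfe => huv (hfinj hfe))
      · intro u v huv
        exact hadj _ _ (hfadj u v ((SimpleGraph.top_adj _ _).mpr huv))
    · refine core hm hc (fun v => {w | ∃ r ∈ ψ v, w ∈ φ r}) ?_ ?_ ?_ ?_
      · intro v
        obtain ⟨r, hr⟩ := Set.nonempty_coe_sort.mp (hψconn v).nonempty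
        obtain ⟨w, hw⟩ := Set.nonempty_coe_sort.mp (hconn r).nonempty
        exact ⟨w, r, hr, hw⟩
      · intro v x hx y hy
        obtain ⟨r1, hr1, hx1⟩ := hx
        obtain ⟨r2, hr2, hy2⟩ := hy
        exact greach_union (fun p x hx y hy => greach_of_connected (hconn p) hx hy)
          hadj (greach_of_connected (hψconn v) hr1 hr2) hx1 hy2
      · intro u v huv
        rw [Set.disjoint_left]
        rintro w ⟨r1, hr1, hw1⟩ ⟨r2, hr2, hw2⟩
        by_cases hr : r1 = r2
        · subst hr
          exact Set.disjoint_left.mp (hψdis u v huv) hr1 hr2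
        · exact Set.disjoint_left.mp (hdisj r1 r2 hr) hw1 hw2
      · intro u v huv
        obtain ⟨p, hp, q, hq, hpq⟩ := hψadj u v ((SimpleGraph.top_adj _ _).mpr huv)
        obtain ⟨a, ha, b, hb, hab⟩ := hadj p q hpq
        exact ⟨a, ⟨p, hp, ha⟩, b, ⟨q, hq, hb⟩, hab⟩
end

section
/- For every m ≥ 1 and c ≥ 1, the c(m+1) × c(m+1) two-dimensional grid graph is not a minor of the hardware graph F(m,c). -/
open SimpleGraph

set_option linter.unreachableTactic false
set_option linter.unnecessarySeqFocus false
set_option linter.unusedTactic false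

namespace NMAux

def nb1 {m : ℕ} (w : Fin m × Fin m × Fin (2*1)) : Fin m × Fin m × Fin (2*1) :=
  (w.1, w.2.1, ⟨1 - w.2.2.val, by omega⟩)

def nb2 {m : ℕ} (w : Fin m × Fin m × Fin (2*1)) : Fin m × Fin m × Fin (2*1) :=
  if w.2.2.val = 0 then (⟨(w.1.val+1) % m, Nat.mod_lt _ w.1.pos⟩, w.2)
  else (w.1, ⟨(w.2.1.val+1) % m, Nat.mod_lt _ w.2.1.pos⟩, w.2.2)

def nb3 {m : ℕ} (w : Fin m × Fin m × Fin (2*1)) : Fin m × Fin m × Fin (2*1) :=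
  if w.2.2.val = 0 then (⟨w.1.val - 1, lt_of_le_of_lt (Nat.sub_le _ _) w.1.isLt⟩, w.2)
  else (w.1, ⟨w.2.1.val - 1, lt_of_le_of_lt (Nat.sub_le _ _) w.2.1.isLt⟩, w.2.2)

lemma hw_adj_eq {m : ℕ} {w y : Fin m × Fin m × Fin (2*1)}
    (h : (hardwareGraph m 1).Adj w y) : y = nb1 w ∨ y = nb2 w ∨ y = nb3 w := by
  simp only [hardwareGraph, fromRel_adj] at h
  obtain ⟨hne, h⟩ := h
  have hy2 := y.2.2.isLt
  have hw2 := w.2.2.isLt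
  have hy1 := y.1.isLt
  have hw1 := w.1.isLt
  have hy21 := y.2.1.isLt
  have hw21 := w.2.1.isLt
  rcases h with (⟨e1,e2,e3,e4⟩|⟨e1,e2,e3,e4⟩|⟨e1,e2,e3,e4⟩)|(⟨e1,e2,e3,e4⟩|⟨e1,e2,e3,e4⟩|⟨e1,e2,e3,e4⟩) <;>
    simp only [Prod.ext_iff, Fin.ext_iff] at e1 e2 ⊢
  · left
    simp only [nb1, Prod.ext_iff, Fin.ext_iff]
    omega
  · right; left
    have hc : w.2.2.val = 0 := by omega
    simp only [nb2, if_pos hc, Prod.ext_iff, Fin.ext_iff]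
    have : (w.1.val + 1) % m = w.1.val + 1 := Nat.mod_eq_of_lt (by omega)
    omega
  · right; left
    have hc : ¬ w.2.2.val = 0 := by omega
    simp only [nb2, if_neg hc, Prod.ext_iff, Fin.ext_iff]
    have : (w.2.1.val + 1) % m = w.2.1.val + 1 := Nat.mod_eq_of_lt (by omega)
    omega
  · left
    simp only [nb1, Prod.ext_iff, Fin.ext_iff]
    omega
  · right; right
    have hc : w.2.2.val = 0 := by omega
    simp only [nb3, if_pos hc, Prod.ext_iff, Fin.ext_iff]
    omega
  · right; right
    have hc : ¬ w.2.2.val = 0 := by omega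
    simp only [nb3, if_neg hc, Prod.ext_iff, Fin.ext_iff]
    omega

lemma hw_no_four {m : ℕ} {w a1 a2 a3 a4 : Fin m × Fin m × Fin (2*1)}
    (h1 : (hardwareGraph m 1).Adj w a1) (h2 : (hardwareGraph m 1).Adj w a2)
    (h3 : (hardwareGraph m 1).Adj w a3) (h4 : (hardwareGraph m 1).Adj w a4)
    (d12 : a1 ≠ a2) (d13 : a1 ≠ a3) (d14 : a1 ≠ a4)
    (d23 : a2 ≠ a3) (d24 : a2 ≠ a4) (d34 : a3 ≠ a4) : False := by
  have e1 := hw_adj_eq h1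
  have e2 := hw_adj_eq h2
  have e3 := hw_adj_eq h3
  have e4 := hw_adj_eq h4
  rcases e1 with e1|e1|e1 <;> rcases e2 with e2|e2|e2 <;> rcases e3 with e3|e3|e3 <;>
    rcases e4 with e4|e4|e4 <;> subst_vars <;> simp_all


open NMAux in
theorem grid_case_one (m : ℕ) (hm : 1 ≤ m) :
    ¬ IsMinor (gridGraph (1 * (m + 1)) (1 * (m + 1))) (hardwareGraph m 1) := by
  classical
  rintro ⟨φ, hconn, hdisj, hedge⟩
  have hne : ∀ v, (φ v).Nonempty := fun v =>
    Set.nonempty_coe_sort.mp (hconn v).nonempty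
  set B : Fin (1*(m+1)) × Fin (1*(m+1)) → Finset (Fin m × Fin m × Fin (2*1)) :=
    fun v => (Set.toFinite (φ v)).toFinset with hB
  have hBne : ∀ v, 1 ≤ (B v).card := by
    intro v
    have h : (Set.toFinite (φ v)).toFinset.Nonempty :=
      (Set.Finite.toFinset_nonempty _).mpr (hne v)
    exact Finset.card_pos.mpr h
  -- interior vertices have bags of size ≥ 2
  have key : ∀ v : Fin (1*(m+1)) × Fin (1*(m+1)),
      0 < v.1.val → v.1.val + 1 < 1*(m+1) → 0 < v.2.val → v.2.val + 1 < 1*(m+1) →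
      2 ≤ (B v).card := by
    rintro ⟨i, j⟩ h1 h2 h3 h4
    by_contra hlt
    push_neg at hlt
    have h5 : (B (i, j)).card = 1 := le_antisymm (by omega) (hBne (i, j))
    obtain ⟨w, hw⟩ := Finset.card_eq_one.mp h5
    have hφv : φ (i, j) = {w} := by
      rw [← (Set.toFinite (φ (i, j))).coe_toFinset]
      rw [show (Set.toFinite (φ (i,j))).toFinset = B (i,j) from rfl, hw]
      simp
    simp only at h1 h2 h3 h4
    set u1 : Fin (1*(m+1)) × Fin (1*(m+1)) := (⟨i.val+1, by omega⟩, j) with hu1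
    set u2 : Fin (1*(m+1)) × Fin (1*(m+1)) := (⟨i.val-1, by omega⟩, j) with hu2
    set u3 : Fin (1*(m+1)) × Fin (1*(m+1)) := (i, ⟨j.val+1, by omega⟩) with hu3
    set u4 : Fin (1*(m+1)) × Fin (1*(m+1)) := (i, ⟨j.val-1, by omega⟩) with hu4
    have adj1 : (gridGraph (1*(m+1)) (1*(m+1))).Adj (i,j) u1 := by
      refine (SimpleGraph.fromRel_adj _ _ _).mpr ⟨?_, Or.inl (Or.inr ⟨rfl, rfl⟩)⟩
      simp only [hu1, ne_eq, Prod.mk.injEq, Fin.ext_iff, not_and]; omega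
    have adj2 : (gridGraph (1*(m+1)) (1*(m+1))).Adj (i,j) u2 := by
      refine (SimpleGraph.fromRel_adj _ _ _).mpr
        ⟨?_, Or.inr (Or.inr ⟨rfl, show i.val - 1 + 1 = i.val by omega⟩)⟩
      simp only [hu2, ne_eq, Prod.mk.injEq, Fin.ext_iff, not_and]; omega
    have adj3 : (gridGraph (1*(m+1)) (1*(m+1))).Adj (i,j) u3 := by
      refine (SimpleGraph.fromRel_adj _ _ _).mpr ⟨?_, Or.inl (Or.inl ⟨rfl, rfl⟩)⟩
      simp only [hu3, ne_eq, Prod.mk.injEq, Fin.ext_iff, not_and]; omega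
    have adj4 : (gridGraph (1*(m+1)) (1*(m+1))).Adj (i,j) u4 := by
      refine (SimpleGraph.fromRel_adj _ _ _).mpr
        ⟨?_, Or.inr (Or.inl ⟨rfl, show j.val - 1 + 1 = j.val by omega⟩)⟩
      simp only [hu4, ne_eq, Prod.mk.injEq, Fin.ext_iff, not_and]; omega
    obtain ⟨a1, ha1, b1, hb1, hab1⟩ := hedge _ _ adj1
    obtain ⟨a2, ha2, b2, hb2, hab2⟩ := hedge _ _ adj2
    obtain ⟨a3, ha3, b3, hb3, hab3⟩ := hedge _ _ adj3
    obtain ⟨a4, ha4, b4, hb4, hab4⟩ := hedge _ _ adj4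
    rw [hφv, Set.mem_singleton_iff] at ha1 ha2 ha3 ha4
    subst ha1; subst ha2; subst ha3; subst ha4
    have hu12 : u1 ≠ u2 := by simp [hu1, hu2, Prod.ext_iff, Fin.ext_iff] <;> omega
    have hu13 : u1 ≠ u3 := by simp [hu1, hu3, Prod.ext_iff, Fin.ext_iff] <;> omega
    have hu14 : u1 ≠ u4 := by simp [hu1, hu4, Prod.ext_iff, Fin.ext_iff] <;> omega
    have hu23 : u2 ≠ u3 := by simp [hu2, hu3, Prod.ext_iff, Fin.ext_iff] <;> omega
    have hu24 : u2 ≠ u4 := by simp [hu2, hu4, Prod.ext_iff, Fin.ext_iff] <;> omega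
    have hu34 : u3 ≠ u4 := by simp [hu3, hu4, Prod.ext_iff, Fin.ext_iff] <;> omega
    have d12 : b1 ≠ b2 := fun h => Set.disjoint_left.mp (hdisj u1 u2 hu12) hb1 (h ▸ hb2)
    have d13 : b1 ≠ b3 := fun h => Set.disjoint_left.mp (hdisj u1 u3 hu13) hb1 (h ▸ hb3)
    have d14 : b1 ≠ b4 := fun h => Set.disjoint_left.mp (hdisj u1 u4 hu14) hb1 (h ▸ hb4)
    have d23 : b2 ≠ b3 := fun h => Set.disjoint_left.mp (hdisj u2 u3 hu23) hb2 (h ▸ hb3)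
    have d24 : b2 ≠ b4 := fun h => Set.disjoint_left.mp (hdisj u2 u4 hu24) hb2 (h ▸ hb4)
    have d34 : b3 ≠ b4 := fun h => Set.disjoint_left.mp (hdisj u3 u4 hu34) hb3 (h ▸ hb4)
    exact hw_no_four hab1 hab2 hab3 hab4 d12 d13 d14 d23 d24 d34
  -- counting
  have hdisjF : ∀ u ∈ Finset.univ, ∀ v ∈ Finset.univ,
      u ≠ v → Disjoint (B u) (B v) := by
    intro u _ v _ huv
    simp only [hB, Set.Finite.disjoint_toFinset]
    exact hdisj u v huv
  have hsum : ∑ v, (B v).card ≤ m * (m * (2*1)) := by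
    rw [← Finset.card_biUnion hdisjF]
    calc (Finset.univ.biUnion B).card ≤ (Finset.univ : Finset (Fin m × Fin m × Fin (2*1))).card :=
          Finset.card_le_univ _
      _ = m * (m * (2*1)) := by simp
  set P : Fin (1*(m+1)) × Fin (1*(m+1)) → Prop :=
    fun v => 0 < v.1.val ∧ v.1.val+1 < 1*(m+1) ∧ 0 < v.2.val ∧ v.2.val+1 < 1*(m+1) with hP
  have hsplit := Finset.sum_filter_add_sum_filter_not Finset.univ P (fun v => (B v).card)
  have hA : (Finset.univ.filter P).card * 2 ≤ ∑ v ∈ Finset.univ.filter P, (B v).card := by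
    have := Finset.card_nsmul_le_sum (Finset.univ.filter P) (fun v => (B v).card) 2
      (fun v hv => by
        simp only [Finset.mem_filter] at hv
        exact key v hv.2.1 hv.2.2.1 hv.2.2.2.1 hv.2.2.2.2)
    simpa [smul_eq_mul, mul_comm] using this
  have hA' : (Finset.univ.filter (fun v => ¬ P v)).card * 1 ≤
      ∑ v ∈ Finset.univ.filter (fun v => ¬ P v), (B v).card := by
    have := Finset.card_nsmul_le_sum (Finset.univ.filter (fun v => ¬ P v))
      (fun v => (B v).card) 1 (fun v _ => hBne v)
    simpa [smul_eq_mul, mul_comm] using this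
  have hPcard : (m-1)*(m-1) ≤ (Finset.univ.filter P).card := by
    have hmaps : ∀ p : Fin (m-1) × Fin (m-1), p ∈ (Finset.univ : Finset (Fin (m-1) × Fin (m-1))) →
        ((⟨p.1.val+1, by have := p.1.isLt; omega⟩ : Fin (1*(m+1))),
         (⟨p.2.val+1, by have := p.2.isLt; omega⟩ : Fin (1*(m+1)))) ∈ Finset.univ.filter P := by
      intro p _
      have h1 := p.1.isLt
      have h2 := p.2.isLt
      simp only [Finset.mem_filter, Finset.mem_univ, hP, true_and]
      refine ⟨by omega, by omega, by omega, by omega⟩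
    have := Finset.card_le_card_of_injOn _ hmaps (by
      intro p _ q _ h
      simp only [Prod.ext_iff, Fin.ext_iff] at h ⊢
      omega)
    simpa using this
  have hcards : (Finset.univ.filter P).card + (Finset.univ.filter (fun v => ¬ P v)).card
      = (1*(m+1)) * (1*(m+1)) := by
    rw [Finset.card_filter_add_card_filter_not]
    simp
  obtain ⟨k, rfl⟩ := Nat.exists_eq_add_of_le hm
  simp only [Nat.add_sub_cancel_left] at hPcard
  nlinarith [hsum, hsplit, hA, hA', hPcard, hcards]

theorem grid_case_ge_two (m c : ℕ) (hm : 1 ≤ m) (hc : 2 ≤ c) :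
    ¬ IsMinor (gridGraph (c * (m + 1)) (c * (m + 1))) (hardwareGraph m c) := by
  classical
  rintro ⟨φ, hconn, hdisj, hedge⟩
  have hne : ∀ v, (φ v).Nonempty := fun v =>
    Set.nonempty_coe_sort.mp (hconn v).nonempty
  have finj : Function.Injective (fun v => (hne v).some) := by
    intro u v huv
    by_contra huv'
    have h1 := (hne u).some_mem
    have h2 := (hne v).some_mem
    simp only at huv
    rw [huv] at h1
    exact Set.disjoint_left.mp (hdisj u v huv') h1 h2
  have hcard := Fintype.card_le_of_injective _ finj
  simp only [Fintype.card_prod, Fintype.card_fin] at hcard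
  have hint : 2*((m+1)*(m+1)) ≤ c*((m+1)*(m+1)) :=
    Nat.mul_le_mul_right _ hc
  nlinarith [hm, hc, hcard, hint]

end NMAux

/-- For every `m ≥ 1` and `c ≥ 1`, the `c(m+1) × c(m+1)` two-dimensional grid
graph is not a minor of the hardware graph `F(m, c)`. -/
theorem not_isMinor_bigGrid (m c : ℕ) (hm : 1 ≤ m) (hc : 1 ≤ c) :
    ¬ IsMinor (gridGraph (c * (m + 1)) (c * (m + 1))) (hardwareGraph m c) := by
  rcases eq_or_lt_of_le hc with h | h
  · subst h
    exact NMAux.grid_case_one m hm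
  · exact NMAux.grid_case_ge_two m c hm h
end

section
/- For every m ≥ 1 and c ≥ 1, the complete graph K_{cm+1} is a minor of the hardware graph F(m,c). -/
open SimpleGraph

namespace HWAux

variable {m c : ℕ}

lemma adj_LR {a b : Fin m} {d e : Fin (2*c)} (hd : d.val < c) (he : c ≤ e.val) :
    (hardwareGraph m c).Adj (a,b,d) (a,b,e) := by
  rw [hardwareGraph, fromRel_adj]
  refine ⟨?_, Or.inl (Or.inl ⟨rfl, rfl, hd, he⟩)⟩
  intro h
  have := congrArg (fun p : Fin m × Fin m × Fin (2*c) => p.2.2.val) h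
  simp at this; omega

lemma adj_down {a a' b : Fin m} {d : Fin (2*c)} (hd : d.val < c) (h : a.val + 1 = a'.val) :
    (hardwareGraph m c).Adj (a,b,d) (a',b,d) := by
  rw [hardwareGraph, fromRel_adj]
  refine ⟨?_, Or.inl (Or.inr (Or.inl ⟨rfl, rfl, hd, h⟩))⟩
  intro hEq
  have := congrArg (fun p : Fin m × Fin m × Fin (2*c) => p.1.val) hEq
  simp at this; omega

lemma adj_right {a b b' : Fin m} {d : Fin (2*c)} (hd : c ≤ d.val) (h : b.val + 1 = b'.val) :
    (hardwareGraph m c).Adj (a,b,d) (a,b',d) := by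
  rw [hardwareGraph, fromRel_adj]
  refine ⟨?_, Or.inl (Or.inr (Or.inr ⟨rfl, rfl, hd, h⟩))⟩
  intro hEq
  have := congrArg (fun p : Fin m × Fin m × Fin (2*c) => p.2.1.val) hEq
  simp at this; omega

lemma step {V : Type} {G : SimpleGraph V} {s : Set V} {u v : V}
    (hu : u ∈ s) (hv : v ∈ s) (h : G.Adj u v) :
    (G.induce s).Reachable ⟨u,hu⟩ ⟨v,hv⟩ :=
  SimpleGraph.Adj.reachable (by exact h)

lemma step' {V : Type} {G : SimpleGraph V} {s : Set V} {u v : ↥s} {x y : V}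
    (hx : u.val = x) (hy : v.val = y) (h : G.Adj x y) :
    (G.induce s).Reachable u v := by
  have hxs : x ∈ s := hx ▸ u.2
  have hys : y ∈ s := hy ▸ v.2
  have h1 : u = ⟨x, hxs⟩ := Subtype.ext hx
  have h2 : v = ⟨y, hys⟩ := Subtype.ext hy
  rw [h1, h2]; exact step hxs hys h

lemma reach_chain {V : Type} {G : SimpleGraph V} {s : Set V} (f : ℕ → V) (n : ℕ)
    (hmem : ∀ i, i ≤ n → f i ∈ s) (hadj : ∀ i, i < n → G.Adj (f i) (f (i+1))) :
    (G.induce s).Reachable ⟨f 0, hmem 0 n.zero_le⟩ ⟨f n, hmem n le_rfl⟩ := by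
  induction n with
  | zero => exact Reachable.refl _
  | succ n ih =>
    exact (ih (fun i hi => hmem i (hi.trans n.le_succ))
      (fun i hi => hadj i (hi.trans n.lt_succ_self))).trans
      (step _ _ (hadj n n.lt_succ_self))

lemma reach_chain' {V : Type} {G : SimpleGraph V} {s : Set V} (f : ℕ → V) (n : ℕ)
    (hmem : ∀ i, i ≤ n → f i ∈ s) (hadj : ∀ i, i < n → G.Adj (f i) (f (i+1)))
    {u v : ↥s} (hu : u.val = f 0) (hv : v.val = f n) :
    (G.induce s).Reachable u v := by
  have h1 : u = ⟨f 0, hmem 0 n.zero_le⟩ := Subtype.ext hu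
  have h2 : v = ⟨f n, hmem n le_rfl⟩ := Subtype.ext hv
  rw [h1, h2]; exact reach_chain f n hmem hadj

def Bset (m c : ℕ) (k : ℕ) : Set (Fin m × Fin m × Fin (2*c)) :=
  {v | if k = c*m then
        v.1.val < v.2.1.val ∨ (v.1.val = m-1 ∧ v.2.1.val = m-1 ∧ v.2.2.val = c-1)
      else
        (v.2.2.val = k % c ∧ v.2.1.val = k / c ∧ k / c ≤ v.1.val ∧ k + 1 ≠ c*m)
        ∨ (v.2.2.val = c + k % c ∧ v.1.val = k / c ∧ v.2.1.val ≤ k / c)}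

lemma mem_Bset {k : ℕ} {v : Fin m × Fin m × Fin (2*c)} :
    v ∈ Bset m c k ↔ (if k = c*m then
        v.1.val < v.2.1.val ∨ (v.1.val = m-1 ∧ v.2.1.val = m-1 ∧ v.2.2.val = c-1)
      else
        (v.2.2.val = k % c ∧ v.2.1.val = k / c ∧ k / c ≤ v.1.val ∧ k + 1 ≠ c*m)
        ∨ (v.2.2.val = c + k % c ∧ v.1.val = k / c ∧ v.2.1.val ≤ k / c)) := Iff.rfl

lemma divmod_inj {k l c : ℕ} (h1 : k / c = l / c) (h2 : k % c = l % c) : k = l := by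
  rw [← Nat.div_add_mod k c, ← Nat.div_add_mod l c, h1, h2]

lemma pred_divmod (hc : 1 ≤ c) {k m : ℕ} (h : k + 1 = c * m) :
    k / c = m - 1 ∧ k % c = c - 1 := by
  have hm0 : m ≠ 0 := by rintro rfl; simp at h
  obtain ⟨n, rfl⟩ : ∃ n, m = n + 1 := ⟨m - 1, (Nat.succ_pred_eq_of_pos (Nat.pos_of_ne_zero hm0)).symm⟩
  have hk : k = c * n + (c - 1) := by rw [Nat.mul_succ] at h; omega
  subst hk
  refine ⟨?_, ?_⟩
  · rw [Nat.mul_add_div (by omega), Nat.div_eq_of_lt (by omega)]; omega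
  · rw [Nat.mul_add_mod, Nat.mod_eq_of_lt (by omega)]

lemma divmod_pred (hc : 1 ≤ c) {k m : ℕ} (hd : k / c = m - 1) (hmo : k % c = c - 1)
    (hk : k < c * m) : k + 1 = c * m := by
  have hm0 : m ≠ 0 := by rintro rfl; simp at hk
  obtain ⟨n, rfl⟩ : ∃ n, m = n + 1 := ⟨m - 1, (Nat.succ_pred_eq_of_pos (Nat.pos_of_ne_zero hm0)).symm⟩
  have := Nat.div_add_mod k c
  rw [hd, hmo] at this
  simp only [Nat.add_sub_cancel] at this
  rw [Nat.mul_succ]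
  omega


lemma triple_ext {x x' y y' : Fin m} {z z' : Fin (2*c)}
    (h1 : x.val = x'.val) (h2 : y.val = y'.val) (h3 : z.val = z'.val) :
    ((x,y,z) : Fin m × Fin m × Fin (2*c)) = (x',y',z') := by
  rw [show x = x' from Fin.ext h1, show y = y' from Fin.ext h2, show z = z' from Fin.ext h3]

lemma branch_connected (hc : 1 ≤ c) {k : ℕ} (hk : k < c * m) :
    ((hardwareGraph m c).induce (Bset m c k)).Connected := by
  have hj : k / c < m := Nat.div_lt_of_lt_mul hk
  have hd : k % c < c := Nat.mod_lt _ (by omega)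
  have hkm : k ≠ c * m := by omega
  have hcd : c + k % c < 2 * c := by omega
  have hroot : ((⟨k/c, hj⟩ : Fin m), (⟨k/c, hj⟩ : Fin m), (⟨c + k % c, hcd⟩ : Fin (2*c)))
      ∈ Bset m c k := by
    rw [mem_Bset, if_neg hkm]; exact Or.inr ⟨rfl, rfl, le_rfl⟩
  have key : ∀ v : ↥(Bset m c k), ((hardwareGraph m c).induce (Bset m c k)).Reachable v
      ⟨_, hroot⟩ := by
    rintro ⟨⟨a, b, e⟩, hv⟩
    have hv' := hv
    rw [mem_Bset, if_neg hkm] at hv'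
    dsimp only at hv'
    rcases hv' with ⟨he, hb, ha, hne⟩ | ⟨he, ha, hb⟩
    · -- left vertex
      have hfb : ∀ i, k/c + min i (a.val - k/c) < m := fun i => by
        have := a.isLt; omega
      have hm0 : ((⟨k/c, hj⟩ : Fin m), b, e) ∈ Bset m c k := by
        rw [mem_Bset, if_neg hkm]; exact Or.inl ⟨he, hb, le_rfl, hne⟩
      have hmem : ∀ i, i ≤ a.val - k/c →
          (((⟨k/c + min i (a.val - k/c), hfb i⟩ : Fin m), b, e)) ∈ Bset m c k := by
        intro i _
        rw [mem_Bset, if_neg hkm]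
        exact Or.inl ⟨he, hb, by simp only [Fin.val_mk]; omega, hne⟩
      have hadj : ∀ i, i < a.val - k/c → (hardwareGraph m c).Adj
          ((⟨k/c + min i (a.val - k/c), hfb i⟩ : Fin m), b, e)
          ((⟨k/c + min (i+1) (a.val - k/c), hfb (i+1)⟩ : Fin m), b, e) :=
        fun i hi => adj_down (by omega) (by simp only [Fin.val_mk]; omega)
      have h1 := reach_chain' _ _ hmem hadj
        (u := ⟨((⟨k/c, hj⟩ : Fin m), b, e), hm0⟩) (v := ⟨(a,b,e), hv⟩)
        (triple_ext (by simp only [Fin.val_mk]; omega) rfl rfl)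
        (triple_ext (by simp only [Fin.val_mk]; omega) rfl rfl)
      refine h1.symm.trans (step' rfl
        (triple_ext rfl hb.symm rfl) (adj_LR (e := (⟨c + k % c, hcd⟩ : Fin (2*c)))
          (by omega) (by simp only [Fin.val_mk]; omega)))
    · -- right vertex
      have hgb : ∀ i, b.val + min i (k/c - b.val) < m := fun i => by omega
      have hmem : ∀ i, i ≤ k/c - b.val →
          ((a, (⟨b.val + min i (k/c - b.val), hgb i⟩ : Fin m), e)) ∈ Bset m c k := by
        intro i _
        rw [mem_Bset, if_neg hkm]
        exact Or.inr ⟨he, ha, by simp only [Fin.val_mk]; omega⟩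
      have hadj : ∀ i, i < k/c - b.val → (hardwareGraph m c).Adj
          (a, (⟨b.val + min i (k/c - b.val), hgb i⟩ : Fin m), e)
          (a, (⟨b.val + min (i+1) (k/c - b.val), hgb (i+1)⟩ : Fin m), e) :=
        fun i hi => adj_right (by omega) (by simp only [Fin.val_mk]; omega)
      exact reach_chain' _ _ hmem hadj
        (triple_ext rfl (by simp only [Fin.val_mk]; omega) rfl)
        (triple_ext ha.symm (by simp only [Fin.val_mk]; omega) he.symm)
  rw [connected_iff]
  exact ⟨fun u v => (key u).trans (key v).symm, ⟨⟨_, hroot⟩⟩⟩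

lemma top_connected (hm : 1 ≤ m) (hc : 1 ≤ c) :
    ((hardwareGraph m c).induce (Bset m c (c*m))).Connected := by
  have hm1 : m - 1 < m := by omega
  have hc1 : c - 1 < 2 * c := by omega
  have h2c1 : 2 * c - 1 < 2 * c := by omega
  have hroot : ((⟨m-1,hm1⟩ : Fin m), (⟨m-1,hm1⟩ : Fin m), (⟨c-1,hc1⟩ : Fin (2*c)))
      ∈ Bset m c (c*m) := by
    rw [mem_Bset, if_pos rfl]; exact Or.inr ⟨rfl, rfl, rfl⟩
  have key : ∀ v : ↥(Bset m c (c*m)), ((hardwareGraph m c).induce (Bset m c (c*m))).Reachable v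
      ⟨_, hroot⟩ := by
    rintro ⟨⟨a, b, e⟩, hv⟩
    have hv' := hv
    rw [mem_Bset, if_pos rfl] at hv'
    dsimp only at hv'
    rcases hv' with hab | ⟨h1, h2, h3⟩
    · -- strictly above the diagonal
      have hbm : b.val ≤ m - 1 := by have := b.isLt; omega
      have ham : a.val < m - 1 := by omega
      have mAB : ∀ (e' : Fin (2*c)), (a, b, e') ∈ Bset m c (c*m) := fun e' => by
        rw [mem_Bset, if_pos rfl]; exact Or.inl hab
      -- step 1 : to (a, b, 2c-1)
      have s1 : ((hardwareGraph m c).induce (Bset m c (c*m))).Reachable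
          ⟨(a,b,e), hv⟩ ⟨(a,b,(⟨2*c-1,h2c1⟩ : Fin (2*c))), mAB _⟩ := by
        rcases Nat.lt_or_ge e.val c with h | h
        · exact step _ _ (adj_LR h (by simp only [Fin.val_mk]; omega))
        · exact ((step (mAB (⟨0, by omega⟩ : Fin (2*c))) hv
            (adj_LR (by simp only [Fin.val_mk]; omega) h)).symm).trans
            (step (mAB _) (mAB _)
              (adj_LR (by simp only [Fin.val_mk]; omega) (by simp only [Fin.val_mk]; omega)))
      -- step 2 : along the row to column m-1
      have hgb : ∀ i, b.val + min i (m-1-b.val) < m := fun i => by omega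
      have m2e : (a, (⟨m-1,hm1⟩ : Fin m), (⟨2*c-1,h2c1⟩ : Fin (2*c))) ∈ Bset m c (c*m) := by
        rw [mem_Bset, if_pos rfl]; exact Or.inl (by simp only [Fin.val_mk]; omega)
      have hmem2 : ∀ i, i ≤ m-1-b.val →
          (a, (⟨b.val + min i (m-1-b.val), hgb i⟩ : Fin m), (⟨2*c-1,h2c1⟩ : Fin (2*c)))
            ∈ Bset m c (c*m) := by
        intro i _
        rw [mem_Bset, if_pos rfl]
        exact Or.inl (by simp only [Fin.val_mk]; omega)
      have hadj2 : ∀ i, i < m-1-b.val → (hardwareGraph m c).Adj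
          (a, (⟨b.val + min i (m-1-b.val), hgb i⟩ : Fin m), (⟨2*c-1,h2c1⟩ : Fin (2*c)))
          (a, (⟨b.val + min (i+1) (m-1-b.val), hgb (i+1)⟩ : Fin m), (⟨2*c-1,h2c1⟩ : Fin (2*c))) :=
        fun i hi => adj_right (by simp only [Fin.val_mk]; omega)
          (by simp only [Fin.val_mk]; omega)
      have s2 := reach_chain' _ _ hmem2 hadj2
        (u := ⟨(a,b,(⟨2*c-1,h2c1⟩ : Fin (2*c))), mAB _⟩)
        (v := ⟨(a, (⟨m-1,hm1⟩ : Fin m), (⟨2*c-1,h2c1⟩ : Fin (2*c))), m2e⟩)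
        (triple_ext rfl (by simp only [Fin.val_mk]; omega) rfl)
        (triple_ext rfl (by simp only [Fin.val_mk]; omega) rfl)
      -- step 3 : to the left half
      have m3 : (a, (⟨m-1,hm1⟩ : Fin m), (⟨c-1,hc1⟩ : Fin (2*c))) ∈ Bset m c (c*m) := by
        rw [mem_Bset, if_pos rfl]; exact Or.inl (by simp only [Fin.val_mk]; omega)
      have s3 := step m2e m3
        ((adj_LR (d := (⟨c-1,hc1⟩ : Fin (2*c))) (e := (⟨2*c-1,h2c1⟩ : Fin (2*c)))
          (by simp only [Fin.val_mk]; omega) (by simp only [Fin.val_mk]; omega)).symm)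
      -- step 4 : down the column to the root
      have hfb4 : ∀ i, a.val + min i (m-1-a.val) < m := fun i => by omega
      have hmem4 : ∀ i, i ≤ m-1-a.val →
          ((⟨a.val + min i (m-1-a.val), hfb4 i⟩ : Fin m), (⟨m-1,hm1⟩ : Fin m),
            (⟨c-1,hc1⟩ : Fin (2*c))) ∈ Bset m c (c*m) := by
        intro i _
        rw [mem_Bset, if_pos rfl]
        rcases Nat.lt_or_ge (a.val + min i (m-1-a.val)) (m-1) with h | h
        · exact Or.inl (by simp only [Fin.val_mk]; omega)
        · exact Or.inr ⟨by simp only [Fin.val_mk]; omega, rfl, rfl⟩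
      have hadj4 : ∀ i, i < m-1-a.val → (hardwareGraph m c).Adj
          ((⟨a.val + min i (m-1-a.val), hfb4 i⟩ : Fin m), (⟨m-1,hm1⟩ : Fin m),
            (⟨c-1,hc1⟩ : Fin (2*c)))
          ((⟨a.val + min (i+1) (m-1-a.val), hfb4 (i+1)⟩ : Fin m), (⟨m-1,hm1⟩ : Fin m),
            (⟨c-1,hc1⟩ : Fin (2*c))) :=
        fun i hi => adj_down (by simp only [Fin.val_mk]; omega)
          (by simp only [Fin.val_mk]; omega)
      have s4 := reach_chain' _ _ hmem4 hadj4
        (u := ⟨(a, (⟨m-1,hm1⟩ : Fin m), (⟨c-1,hc1⟩ : Fin (2*c))), m3⟩)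
        (v := ⟨_, hroot⟩)
        (triple_ext (by simp only [Fin.val_mk]; omega) rfl rfl)
        (triple_ext (by simp only [Fin.val_mk]; omega) rfl rfl)
      exact s1.trans (s2.trans (s3.trans s4))
    · -- the special vertex is the root itself
      rw [show (⟨(a,b,e), hv⟩ : ↥(Bset m c (c*m))) = ⟨_, hroot⟩ from
        Subtype.ext (triple_ext h1 h2 h3)]
  rw [connected_iff]
  exact ⟨fun u v => (key u).trans (key v).symm, ⟨⟨_, hroot⟩⟩⟩

lemma Bdisj (hc : 1 ≤ c) {k l : ℕ} (hk : k ≤ c*m) (hl : l ≤ c*m) (hne : k ≠ l) :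
    Disjoint (Bset m c k) (Bset m c l) := by
  have hkc : k % c < c := Nat.mod_lt _ (by omega)
  have hlc : l % c < c := Nat.mod_lt _ (by omega)
  rw [Set.disjoint_left]
  rintro ⟨a, b, e⟩ h1 h2
  rw [mem_Bset] at h1 h2
  dsimp only at h1 h2
  by_cases e1 : k = c*m <;> by_cases e2 : l = c*m
  · exact hne (e1.trans e2.symm)
  · rw [if_pos e1] at h1; rw [if_neg e2] at h2
    rcases h1 with hab | ⟨q1, q2, q3⟩ <;>
      rcases h2 with ⟨r1, r2, r3, r4⟩ | ⟨r1, r2, r3⟩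
    · omega
    · omega
    · exact r4 (divmod_pred (m := m) hc (by omega) (by omega) (by omega))
    · omega
  · rw [if_neg e1] at h1; rw [if_pos e2] at h2
    rcases h2 with hab | ⟨q1, q2, q3⟩ <;>
      rcases h1 with ⟨r1, r2, r3, r4⟩ | ⟨r1, r2, r3⟩
    · omega
    · omega
    · exact r4 (divmod_pred (m := m) hc (by omega) (by omega) (by omega))
    · omega
  · rw [if_neg e1] at h1; rw [if_neg e2] at h2
    rcases h1 with ⟨q1, q2, q3, q4⟩ | ⟨q1, q2, q3⟩ <;>
      rcases h2 with ⟨r1, r2, r3, r4⟩ | ⟨r1, r2, r3⟩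
    · exact hne (divmod_inj (c := c) (by omega) (by omega))
    · omega
    · omega
    · exact hne (divmod_inj (c := c) (by omega) (by omega))

lemma edge_branch (hc : 1 ≤ c) {k l : ℕ} (hk : k < c*m) (hl : l < c*m)
    (hj : l/c ≤ k/c) (hB : l + 1 ≠ c*m) :
    ∃ x ∈ Bset m c k, ∃ y ∈ Bset m c l, (hardwareGraph m c).Adj x y := by
  have hjk : k/c < m := Nat.div_lt_of_lt_mul hk
  have hjl : l/c < m := by omega
  have hdk : k % c < c := Nat.mod_lt _ (by omega)
  have hdl : l % c < c := Nat.mod_lt _ (by omega)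
  refine ⟨((⟨k/c, hjk⟩ : Fin m), (⟨l/c, hjl⟩ : Fin m), (⟨c + k % c, by omega⟩ : Fin (2*c))), ?_,
    ((⟨k/c, hjk⟩ : Fin m), (⟨l/c, hjl⟩ : Fin m), (⟨l % c, by omega⟩ : Fin (2*c))), ?_, ?_⟩
  · rw [mem_Bset, if_neg (by omega)]; exact Or.inr ⟨rfl, rfl, hj⟩
  · rw [mem_Bset, if_neg (by omega)]; exact Or.inl ⟨rfl, rfl, hj, hB⟩
  · exact (adj_LR (show l % c < c from hdl) (show c ≤ c + k % c by omega)).symm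

lemma edge_top (hm : 1 ≤ m) (hc : 1 ≤ c) {k : ℕ} (hk : k < c*m) :
    ∃ x ∈ Bset m c k, ∃ y ∈ Bset m c (c*m), (hardwareGraph m c).Adj x y := by
  have hm1 : m - 1 < m := by omega
  have hjk : k/c < m := Nat.div_lt_of_lt_mul hk
  have hdk : k % c < c := Nat.mod_lt _ (by omega)
  by_cases hB : k + 1 = c*m
  · obtain ⟨hdv, hmd⟩ := pred_divmod hc hB
    refine ⟨((⟨m-1,hm1⟩ : Fin m), (⟨m-1,hm1⟩ : Fin m), (⟨2*c-1, by omega⟩ : Fin (2*c))), ?_,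
      ((⟨m-1,hm1⟩ : Fin m), (⟨m-1,hm1⟩ : Fin m), (⟨c-1, by omega⟩ : Fin (2*c))), ?_, ?_⟩
    · rw [mem_Bset, if_neg (by omega)]
      exact Or.inr ⟨show 2*c-1 = c + k % c by omega, show m-1 = k/c by omega,
        show m-1 ≤ k/c by omega⟩
    · rw [mem_Bset, if_pos rfl]; exact Or.inr ⟨rfl, rfl, rfl⟩
    · exact (adj_LR (show c-1 < c by omega) (show c ≤ 2*c-1 by omega)).symm
  · rcases Nat.eq_zero_or_pos (k/c) with hj0 | hjpos
    · rcases Nat.lt_or_ge 1 m with hm2 | hm1'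
      · -- j = 0, m ≥ 2
        refine ⟨((⟨0, by omega⟩ : Fin m), (⟨0, by omega⟩ : Fin m),
            (⟨c + k % c, by omega⟩ : Fin (2*c))), ?_,
          ((⟨0, by omega⟩ : Fin m), (⟨1, by omega⟩ : Fin m),
            (⟨c + k % c, by omega⟩ : Fin (2*c))), ?_, ?_⟩
        · rw [mem_Bset, if_neg (by omega)]
          exact Or.inr ⟨rfl, show (0:ℕ) = k/c by omega, show (0:ℕ) ≤ k/c by omega⟩
        · rw [mem_Bset, if_pos rfl]; exact Or.inl (show (0:ℕ) < 1 by omega)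
        · exact adj_right (show c ≤ c + k % c by omega) (show 0 + 1 = 1 by omega)
      · -- j = 0, m = 1
        refine ⟨((⟨0, by omega⟩ : Fin m), (⟨0, by omega⟩ : Fin m),
            (⟨c + k % c, by omega⟩ : Fin (2*c))), ?_,
          ((⟨0, by omega⟩ : Fin m), (⟨0, by omega⟩ : Fin m),
            (⟨c-1, by omega⟩ : Fin (2*c))), ?_, ?_⟩
        · rw [mem_Bset, if_neg (by omega)]
          exact Or.inr ⟨rfl, show (0:ℕ) = k/c by omega, show (0:ℕ) ≤ k/c by omega⟩
        · rw [mem_Bset, if_pos rfl]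
          exact Or.inr ⟨show (0:ℕ) = m-1 by omega, show (0:ℕ) = m-1 by omega, rfl⟩
        · exact (adj_LR (show c-1 < c by omega) (show c ≤ c + k % c by omega)).symm
    · -- j ≥ 1
      refine ⟨((⟨k/c, hjk⟩ : Fin m), (⟨k/c, hjk⟩ : Fin m), (⟨k % c, by omega⟩ : Fin (2*c))), ?_,
        ((⟨k/c - 1, by omega⟩ : Fin m), (⟨k/c, hjk⟩ : Fin m),
          (⟨k % c, by omega⟩ : Fin (2*c))), ?_, ?_⟩
      · rw [mem_Bset, if_neg (by omega)]; exact Or.inl ⟨rfl, rfl, le_rfl, hB⟩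
      · rw [mem_Bset, if_pos rfl]; exact Or.inl (show k/c - 1 < k/c by omega)
      · exact (adj_down (show k % c < c from hdk) (show k/c - 1 + 1 = k/c by omega)).symm

lemma edge_all (hm : 1 ≤ m) (hc : 1 ≤ c) {k l : ℕ} (hk : k ≤ c*m) (hl : l ≤ c*m)
    (hne : k ≠ l) :
    ∃ x ∈ Bset m c k, ∃ y ∈ Bset m c l, (hardwareGraph m c).Adj x y := by
  have swap : ∀ {k l : ℕ}, (∃ x ∈ Bset m c k, ∃ y ∈ Bset m c l, (hardwareGraph m c).Adj x y) →
      ∃ x ∈ Bset m c l, ∃ y ∈ Bset m c k, (hardwareGraph m c).Adj x y := by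
    rintro k l ⟨x, hx, y, hy, h⟩; exact ⟨y, hy, x, hx, h.symm⟩
  rcases Nat.lt_or_ge k (c*m) with hk' | hk'
  · rcases Nat.lt_or_ge l (c*m) with hl' | hl'
    · -- both branch sets
      rcases Nat.le_total (l/c) (k/c) with h | h
      · by_cases hB : l + 1 = c*m
        · -- then l/c = m-1 so k/c = m-1 as well; use k as the left provider
          have hdv := (pred_divmod hc hB).1
          have hjk : k/c < m := Nat.div_lt_of_lt_mul hk'
          have hBk : k + 1 ≠ c*m := by omega
          exact swap (edge_branch hc hl' hk' (by omega) hBk)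
        · exact edge_branch hc hk' hl' h hB
      · by_cases hB : k + 1 = c*m
        · have hdv := (pred_divmod hc hB).1
          have hjl : l/c < m := Nat.div_lt_of_lt_mul hl'
          have hBl : l + 1 ≠ c*m := by omega
          exact edge_branch hc hk' hl' (by omega) hBl
        · exact swap (edge_branch hc hl' hk' h hB)
    · -- l = c*m
      have : l = c*m := by omega
      subst this
      exact edge_top hm hc hk'
  · -- k = c*m
    have : k = c*m := by omega
    subst this
    have hl' : l < c*m := by omega
    exact swap (edge_top hm hc hl')

end HWAux


/-- For every `m ≥ 1` and `c ≥ 1`, the complete graph `K_{cm+1}` is a minor of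
the hardware graph `F(m, c)`. -/
theorem isMinor_clique_hardwareGraph (m c : ℕ) (hm : 1 ≤ m) (hc : 1 ≤ c) :
    IsMinor (⊤ : SimpleGraph (Fin (c * m + 1))) (hardwareGraph m c) := by
  refine ⟨fun k => HWAux.Bset m c k.val, ?_, ?_, ?_⟩
  · intro k
    rcases Nat.lt_or_ge k.val (c*m) with h | h
    · exact HWAux.branch_connected hc h
    · have hk : k.val = c*m := by have := k.isLt; omega
      have hset : HWAux.Bset m c k.val = HWAux.Bset m c (c*m) := by rw [hk]
      show (SimpleGraph.induce (HWAux.Bset m c k.val) (hardwareGraph m c)).Connected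
      rw [hset]
      exact HWAux.top_connected hm hc
  · intro u v huv
    exact HWAux.Bdisj hc (Nat.lt_succ_iff.mp u.isLt) (Nat.lt_succ_iff.mp v.isLt)
      (fun h => huv (Fin.ext h))
  · intro u v huv
    exact HWAux.edge_all hm hc (Nat.lt_succ_iff.mp u.isLt) (Nat.lt_succ_iff.mp v.isLt)
      (fun h => huv.ne (Fin.ext h))
end
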